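/- arXiv:1802.00397 — 8 statements merged into one kernel-verified Lean document; each statement's English description precedes it below -/
import Mathlib

section
/- For every Lebesgue-integrable function f : ℝ → ℝ, the integral of f over ℝ equals the integral of x ↦ f(x - 1/x) over ℝ; equivalently, the Boole map preserves Lebesgue measure. -/
open MeasureTheory

noncomputable def sq4 (y : ℝ) : ℝ := Real.sqrt (y ^ 2 + 4)

lemma sq4_sq (y : ℝ) : sq4 y ^ 2 = y ^ 2 + 4 := Real.sq_sqrt (by positivity)

lemma abs_lt_sq4 (y : ℝ) : |y| < sq4 y := by
  have h : Real.sqrt (y ^ 2) < Real.sqrt (y ^ 2 + 4) :=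
    Real.sqrt_lt_sqrt (by positivity) (by linarith)
  simpa [Real.sqrt_sq_eq_abs, sq4] using h

lemma sq4_pos (y : ℝ) : 0 < sq4 y := lt_of_le_of_lt (abs_nonneg y) (abs_lt_sq4 y)

noncomputable def gp (y : ℝ) : ℝ := (y + sq4 y) / 2
noncomputable def gm (y : ℝ) : ℝ := (y - sq4 y) / 2

lemma gp_pos (y : ℝ) : 0 < gp y := by
  have h1 := abs_lt_sq4 y
  have h2 := neg_abs_le y
  unfold gp; linarith

lemma gm_neg (y : ℝ) : gm y < 0 := by
  have h1 := abs_lt_sq4 y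
  have h2 := le_abs_self y
  unfold gm; linarith

lemma T_gp (y : ℝ) : gp y - 1 / gp y = y := by
  have hx : gp y ≠ 0 := ne_of_gt (gp_pos y)
  have hq : gp y ^ 2 - y * gp y - 1 = 0 := by
    have h := sq4_sq y
    unfold gp; nlinarith [h]
  field_simp
  nlinarith [hq]

lemma T_gm (y : ℝ) : gm y - 1 / gm y = y := by
  have hx : gm y ≠ 0 := ne_of_lt (gm_neg y)
  have hq : gm y ^ 2 - y * gm y - 1 = 0 := by
    have h := sq4_sq y
    unfold gm; nlinarith [h]
  field_simp
  nlinarith [hq]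

lemma gp_inj : Function.Injective gp := by
  intro a b h
  have := T_gp a
  rw [h, T_gp b] at this
  exact this.symm

lemma gm_inj : Function.Injective gm := by
  intro a b h
  have := T_gm a
  rw [h, T_gm b] at this
  exact this.symm

lemma gp_eq {x : ℝ} (hx : 0 < x) : gp (x - 1 / x) = x := by
  have hs : sq4 (x - 1 / x) = x + 1 / x := by
    unfold sq4
    rw [show (x - 1 / x) ^ 2 + 4 = (x + 1 / x) ^ 2 by field_simp; ring]
    exact Real.sqrt_sq (by positivity)
  unfold gp; rw [hs]; ring

lemma gm_eq {x : ℝ} (hx : x < 0) : gm (x - 1 / x) = x := by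
  have hs : sq4 (x - 1 / x) = -(x + 1 / x) := by
    unfold sq4
    have hx' : x ≠ 0 := ne_of_lt hx
    rw [show (x - 1 / x) ^ 2 + 4 = (-(x + 1 / x)) ^ 2 by field_simp; ring]
    refine Real.sqrt_sq ?_
    have hx' : x ≠ 0 := ne_of_lt hx
    have h1 : 1 / x < 0 := one_div_neg.mpr hx
    linarith
  unfold gm; rw [hs]; ring

lemma range_gp : Set.range gp = Set.Ioi 0 := by
  ext x
  constructor
  · rintro ⟨y, rfl⟩; exact gp_pos y
  · intro hx; exact ⟨x - 1 / x, gp_eq hx⟩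

lemma range_gm : Set.range gm = Set.Iio 0 := by
  ext x
  constructor
  · rintro ⟨y, rfl⟩; exact gm_neg y
  · intro hx; exact ⟨x - 1 / x, gm_eq hx⟩

noncomputable def Dp (y : ℝ) : ℝ := (1 + y / sq4 y) / 2
noncomputable def Dm (y : ℝ) : ℝ := (1 - y / sq4 y) / 2

lemma Dp_pos (y : ℝ) : 0 < Dp y := by
  have h1 := abs_lt_sq4 y
  have h2 := neg_abs_le y
  have h3 := sq4_pos y
  have : -1 < y / sq4 y := by
    rw [lt_div_iff₀ h3]; linarith
  unfold Dp; linarith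

lemma Dm_pos (y : ℝ) : 0 < Dm y := by
  have h1 := abs_lt_sq4 y
  have h2 := le_abs_self y
  have h3 := sq4_pos y
  have : y / sq4 y < 1 := by
    rw [div_lt_iff₀ h3]; linarith
  unfold Dm; linarith

lemma Dp_le_one (y : ℝ) : Dp y ≤ 1 := by
  have := Dm_pos y
  unfold Dp; unfold Dm at this; linarith

lemma Dm_le_one (y : ℝ) : Dm y ≤ 1 := by
  have := Dp_pos y
  unfold Dm; unfold Dp at this; linarith

lemma Dp_add_Dm (y : ℝ) : Dp y + Dm y = 1 := by unfold Dp Dm; ring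

lemma hasDerivAt_sq4 (y : ℝ) : HasDerivAt sq4 (y / sq4 y) y := by
  have h1 : HasDerivAt (fun y : ℝ => y ^ 2 + 4) (2 * y) y := by
    simpa using (hasDerivAt_pow 2 y).add_const 4
  have hne : (y ^ 2 + 4) ≠ 0 := by positivity
  have h2 := h1.sqrt hne
  convert h2 using 1
  have hsne : Real.sqrt (y ^ 2 + 4) ≠ 0 := ne_of_gt (sq4_pos y)
  unfold sq4
  field_simp
  unfold sq4
  ring_nf

lemma hasDerivAt_gp (y : ℝ) : HasDerivAt gp (Dp y) y :=
  ((hasDerivAt_id y).add (hasDerivAt_sq4 y)).div_const 2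

lemma hasDerivAt_gm (y : ℝ) : HasDerivAt gm (Dm y) y :=
  ((hasDerivAt_id y).sub (hasDerivAt_sq4 y)).div_const 2

lemma continuous_sq4 : Continuous sq4 :=
  (continuous_pow 2 |>.add continuous_const).sqrt

lemma continuous_Dp : Continuous Dp :=
  ((continuous_const.add (continuous_id.div continuous_sq4
    fun y => ne_of_gt (sq4_pos y))).div_const 2)

lemma continuous_Dm : Continuous Dm :=
  ((continuous_const.sub (continuous_id.div continuous_sq4
    fun y => ne_of_gt (sq4_pos y))).div_const 2)

theorem boole_integral_invariance (f : ℝ → ℝ) (hf : Integrable f) :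
    ∫ x, f x = ∫ x, f (x - 1 / x) := by
  set g : ℝ → ℝ := fun x => f (x - 1 / x) with hg
  -- integrability of Dp * f and Dm * f
  have hintp : Integrable (fun y => Dp y * f y) := by
    refine hf.bdd_mul continuous_Dp.aestronglyMeasurable (c := 1) (ae_of_all _ fun y => ?_)
    rw [Real.norm_eq_abs, abs_of_pos (Dp_pos y)]; exact Dp_le_one y
  have hintm : Integrable (fun y => Dm y * f y) := by
    refine hf.bdd_mul continuous_Dm.aestronglyMeasurable (c := 1) (ae_of_all _ fun y => ?_)
    rw [Real.norm_eq_abs, abs_of_pos (Dm_pos y)]; exact Dm_le_one y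
  have hderivp : ∀ y ∈ (Set.univ : Set ℝ),
      HasDerivWithinAt gp (Dp y) Set.univ y :=
    fun y _ => (hasDerivAt_gp y).hasDerivWithinAt
  have hderivm : ∀ y ∈ (Set.univ : Set ℝ),
      HasDerivWithinAt gm (Dm y) Set.univ y :=
    fun y _ => (hasDerivAt_gm y).hasDerivWithinAt
  have himp : gp '' Set.univ = Set.Ioi 0 := by rw [Set.image_univ, range_gp]
  have himm : gm '' Set.univ = Set.Iio 0 := by rw [Set.image_univ, range_gm]
  have hcongr_p : (fun y => |Dp y| • g (gp y)) = fun y => Dp y * f y := by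
    funext y
    simp only [hg, smul_eq_mul, T_gp y, abs_of_pos (Dp_pos y)]
  have hcongr_m : (fun y => |Dm y| • g (gm y)) = fun y => Dm y * f y := by
    funext y
    simp only [hg, smul_eq_mul, T_gm y, abs_of_pos (Dm_pos y)]
  -- set integrals via change of variables
  have hip : ∫ x in Set.Ioi (0:ℝ), g x = ∫ y, Dp y * f y := by
    rw [← himp,
      MeasureTheory.integral_image_eq_integral_abs_deriv_smul MeasurableSet.univ
        hderivp (gp_inj.injOn) g,
      hcongr_p, setIntegral_univ]
  have him : ∫ x in Set.Iio (0:ℝ), g x = ∫ y, Dm y * f y := by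
    rw [← himm,
      MeasureTheory.integral_image_eq_integral_abs_deriv_smul MeasurableSet.univ
        hderivm (gm_inj.injOn) g,
      hcongr_m, setIntegral_univ]
  -- integrability on each half-line
  have hIOp : IntegrableOn g (Set.Ioi 0) := by
    rw [← himp,
      MeasureTheory.integrableOn_image_iff_integrableOn_abs_deriv_smul
        MeasurableSet.univ hderivp (gp_inj.injOn) g,
      hcongr_p]
    exact hintp.integrableOn
  have hIOm : IntegrableOn g (Set.Iio 0) := by
    rw [← himm,
      MeasureTheory.integrableOn_image_iff_integrableOn_abs_deriv_smul
        MeasurableSet.univ hderivm (gm_inj.injOn) g,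
      hcongr_m]
    exact hintm.integrableOn
  -- split the integral over ℝ
  have hIc : IntegrableOn g (Set.Iic 0) := by
    unfold IntegrableOn
    rw [← Measure.restrict_congr_set Iio_ae_eq_Iic]
    exact hIOm
  have hIicIio : ∫ x in Set.Iic (0:ℝ), g x = ∫ x in Set.Iio 0, g x :=
    (setIntegral_congr_set Iio_ae_eq_Iic).symm
  have h1 : ∫ x, f x = (∫ y, Dp y * f y) + ∫ y, Dm y * f y := by
    rw [← integral_add hintp hintm]
    congr 1
    funext y
    rw [← add_mul, Dp_add_Dm, one_mul]
  rw [h1, ← hip, ← him, ← hIicIio, add_comm]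
  exact intervalIntegral.integral_Iic_add_Ioi hIc hIOp
end

section
/- If F : ℝ → ℝ is a bounded measurable function such that the limit A(F) := lim_{a→+∞} (1/(2a)) ∫_{-a}^{a} F dm exists, then the limit A(F ∘ T) also exists and A(F ∘ T) = A(F), where T is the Boole map. -/
open MeasureTheory Filter

noncomputable def boolePP (y : ℝ) : ℝ := (y + Real.sqrt (y^2+4))/2
noncomputable def boolePhi (y : ℝ) : ℝ := (1 + y / Real.sqrt (y^2+4))/2

lemma boole_sq_pos (y : ℝ) : (0:ℝ) < y^2 + 4 := by positivity

lemma boole_sqrt_pos (y : ℝ) : 0 < Real.sqrt (y^2+4) :=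
  Real.sqrt_pos.mpr (boole_sq_pos y)

lemma boole_abs_lt_sqrt (y : ℝ) : |y| < Real.sqrt (y^2+4) := by
  have : |y| = Real.sqrt (y^2) := by rw [Real.sqrt_sq_eq_abs]
  rw [this]
  exact Real.sqrt_lt_sqrt (sq_nonneg y) (by linarith)

lemma boolePP_pos (y : ℝ) : 0 < boolePP y := by
  have h := boole_abs_lt_sqrt y
  have := abs_lt.mp h
  unfold boolePP; linarith [this.1]

lemma boolePhi_pos (y : ℝ) : 0 < boolePhi y := by
  have hs := boole_sqrt_pos y
  have h := (abs_lt.mp (boole_abs_lt_sqrt y)).1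
  have : -1 < y / Real.sqrt (y^2+4) := by
    rw [lt_div_iff₀ hs]; linarith
  unfold boolePhi; linarith

lemma boole_hasDerivAt_pp (y : ℝ) : HasDerivAt boolePP (boolePhi y) y := by
  have hs := boole_sqrt_pos y
  have h1 : HasDerivAt (fun y : ℝ => y^2 + 4) (2*y) y := by
    simpa using ((hasDerivAt_pow 2 y).add_const 4)
  have h2 : HasDerivAt (fun y : ℝ => Real.sqrt (y^2+4))
      (1 / (2 * Real.sqrt (y^2+4)) * (2*y)) y :=
    (Real.hasDerivAt_sqrt (ne_of_gt (boole_sq_pos y))).comp y h1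
  have h3 : HasDerivAt (fun y : ℝ => y + Real.sqrt (y^2+4))
      (1 + 1 / (2 * Real.sqrt (y^2+4)) * (2*y)) y := (hasDerivAt_id y).add h2
  have h4 := h3.div_const 2
  refine h4.congr_deriv ?_
  unfold boolePhi
  field_simp

lemma boole_T_pp (y : ℝ) : boolePP y - 1 / boolePP y = y := by
  have hs := boole_sqrt_pos y
  have hp := boolePP_pos y
  have hsq : Real.sqrt (y^2+4) ^ 2 = y^2 + 4 := Real.sq_sqrt (le_of_lt (boole_sq_pos y))
  have hinv : 1 / boolePP y = (Real.sqrt (y^2+4) - y) / 2 := by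
    rw [div_eq_div_iff (ne_of_gt hp) (by norm_num : (2:ℝ) ≠ 0)]
    unfold boolePP
    nlinarith [hsq]
  rw [hinv]; unfold boolePP; ring

lemma boolePP_strictMono : StrictMono boolePP := by
  apply strictMono_of_deriv_pos
  intro y
  rw [(boole_hasDerivAt_pp y).deriv]
  exact boolePhi_pos y

lemma boolePhi_add (y : ℝ) : boolePhi y + boolePhi (-y) = 1 := by
  have hs := boole_sqrt_pos y
  unfold boolePhi
  rw [neg_pow, show ((-1:ℝ))^2 = 1 by norm_num]
  field_simp
  ring

lemma boolePP_continuous : Continuous boolePP := by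
  unfold boolePP
  fun_prop

lemma boole_key {a : ℝ} (ha : 1 < a) : Real.sqrt ((a - 1/a)^2+4) = a + 1/a := by
  have ha0 : (0:ℝ) < a := by linarith
  rw [show (a - 1/a)^2+4 = (a+1/a)^2 by field_simp; ring]
  exact Real.sqrt_sq (by positivity)

lemma boolePP_c {a : ℝ} (ha : 1 < a) : boolePP (a - 1/a) = a := by
  unfold boolePP; rw [boole_key ha]; ring

lemma boolePP_nc {a : ℝ} (ha : 1 < a) : boolePP (-(a - 1/a)) = 1/a := by
  unfold boolePP
  rw [neg_pow, show ((-1:ℝ))^2 = 1 by norm_num, one_mul, boole_key ha]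
  ring

lemma boole_cov (F : ℝ → ℝ) {a : ℝ} (ha : 1 < a) :
    ∫ x in (1/a)..a, F (x - 1/x) =
      ∫ y in (-(a - 1/a))..(a - 1/a), |boolePhi y| * F y := by
  have ha0 : (0:ℝ) < a := by linarith
  set c := a - 1/a with hc
  have hcpos : 0 < c := by
    have : 1/a < 1 := by rw [div_lt_one ha0]; exact ha
    simp only [hc]; linarith
  have h1a : 1/a ≤ a := by
    have : 1/a < 1 := by rw [div_lt_one ha0]; exact ha
    linarith
  have hiq : -c ≤ c := by linarith
  have himage : boolePP '' Set.Icc (-c) c = Set.Icc (1/a) a := by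
    apply Set.Subset.antisymm
    · rintro _ ⟨y, hy, rfl⟩
      exact ⟨(boolePP_nc ha) ▸ boolePP_strictMono.monotone hy.1,
             (boolePP_c ha) ▸ boolePP_strictMono.monotone hy.2⟩
    · have h := intermediate_value_Icc hiq boolePP_continuous.continuousOn
      rwa [boolePP_nc ha, boolePP_c ha] at h
  rw [intervalIntegral.integral_of_le h1a, intervalIntegral.integral_of_le hiq,
      ← integral_Icc_eq_integral_Ioc, ← integral_Icc_eq_integral_Ioc, ← himage,
      integral_image_eq_integral_abs_deriv_smul measurableSet_Icc
        (fun y _ => (boole_hasDerivAt_pp y).hasDerivWithinAt)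
        (boolePP_strictMono.injective.injOn) (fun x => F (x - 1/x))]
  simp only [smul_eq_mul, boole_T_pp]

lemma boole_ii {G : ℝ → ℝ} (hG : Measurable G) {C : ℝ} (hb : ∀ x, |G x| ≤ C)
    (a b : ℝ) : IntervalIntegrable G volume a b := by
  apply IntervalIntegrable.mono_fun' (g := fun _ => C) intervalIntegrable_const
    hG.aestronglyMeasurable.restrict
  exact ae_of_all _ fun x => by simpa using hb x
lemma boolePhi_le_one (y : ℝ) : boolePhi y ≤ 1 := by
  have hs := boole_sqrt_pos y
  have h := (abs_lt.mp (boole_abs_lt_sqrt y)).2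
  have : y / Real.sqrt (y^2+4) ≤ 1 := by
    rw [div_le_one hs]; linarith
  unfold boolePhi; linarith

lemma boolePhi_continuous : Continuous boolePhi := by
  unfold boolePhi
  apply Continuous.div_const
  apply continuous_const.add
  exact continuous_id.div (by fun_prop) (fun y => ne_of_gt (boole_sqrt_pos y))

theorem boole_average_invariant (F : ℝ → ℝ) (hFm : Measurable F)
    (C : ℝ) (hFb : ∀ x, |F x| ≤ C) (A : ℝ)
    (hF : Tendsto (fun a : ℝ => (1 / (2 * a)) * ∫ x in (-a)..a, F x) atTop (nhds A)) :
    Tendsto (fun a : ℝ => (1 / (2 * a)) * ∫ x in (-a)..a, F (x - 1 / x)) atTop (nhds A) := by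
  have hC0 : 0 ≤ C := le_trans (abs_nonneg _) (hFb 0)
  have hTm : Measurable (fun x : ℝ => F (x - 1 / x)) :=
    hFm.comp (measurable_id.sub (measurable_const.div measurable_id))
  have hTb : ∀ x : ℝ, |F (x - 1 / x)| ≤ C := fun x => hFb _
  have hm1 : Measurable (fun y : ℝ => |boolePhi y| * F y) :=
    (boolePhi_continuous.abs.measurable).mul hFm
  have hm2 : Measurable (fun y : ℝ => |boolePhi (-y)| * F y) :=
    ((boolePhi_continuous.comp continuous_neg).abs.measurable).mul hFm
  have hb1 : ∀ y : ℝ, |(|boolePhi y| * F y)| ≤ C := by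
    intro y
    rw [abs_mul, abs_abs]
    calc |boolePhi y| * |F y| ≤ 1 * |F y| := by
          apply mul_le_mul_of_nonneg_right _ (abs_nonneg _)
          rw [abs_of_pos (boolePhi_pos y)]; exact boolePhi_le_one y
      _ = |F y| := one_mul _
      _ ≤ C := hFb y
  have hb2 : ∀ y : ℝ, |(|boolePhi (-y)| * F y)| ≤ C := by
    intro y
    rw [abs_mul, abs_abs]
    calc |boolePhi (-y)| * |F y| ≤ 1 * |F y| := by
          apply mul_le_mul_of_nonneg_right _ (abs_nonneg _)
          rw [abs_of_pos (boolePhi_pos (-y))]; exact boolePhi_le_one (-y)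
      _ = |F y| := one_mul _
      _ ≤ C := hFb y
  -- the key identity
  have key : ∀ a : ℝ, 1 < a →
      (∫ x in (-a)..a, F (x - 1 / x)) =
        (∫ x in (-(1/a))..(1/a), F (x - 1 / x)) + ∫ y in (-(a - 1/a))..(a - 1/a), F y := by
    intro a ha
    have ha0 : (0:ℝ) < a := by linarith
    set c := a - 1/a with hcdef
    have hsplit1 : (∫ x in (-a)..(1/a), F (x - 1 / x)) + (∫ x in (1/a)..a, F (x - 1 / x))
        = ∫ x in (-a)..a, F (x - 1 / x) :=
      intervalIntegral.integral_add_adjacent_intervals (boole_ii hTm hTb _ _) (boole_ii hTm hTb _ _)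
    have hsplit2 : (∫ x in (-a)..(-(1/a)), F (x - 1 / x)) + (∫ x in (-(1/a))..(1/a), F (x - 1 / x))
        = ∫ x in (-a)..(1/a), F (x - 1 / x) :=
      intervalIntegral.integral_add_adjacent_intervals (boole_ii hTm hTb _ _) (boole_ii hTm hTb _ _)
    -- positive branch
    have hpos : (∫ x in (1/a)..a, F (x - 1 / x)) = ∫ y in (-c)..c, |boolePhi y| * F y :=
      boole_cov F ha
    -- negative branch
    have hneg : (∫ x in (-a)..(-(1/a)), F (x - 1 / x)) = ∫ y in (-c)..c, |boolePhi (-y)| * F y := by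
      have e1 : (∫ x in (1/a)..a, (fun y => F (-y)) (x - 1 / x))
          = ∫ y in (-c)..c, |boolePhi y| * F (-y) := boole_cov (fun y => F (-y)) ha
      have e2 : (∫ x in (1/a)..a, F ((-x) - 1 / (-x))) = ∫ x in (-a)..(-(1/a)), F (x - 1 / x) := by
        simpa using intervalIntegral.integral_comp_neg (a := 1/a) (b := a)
          (fun x => F (x - 1 / x))
      have e3 : (∫ x in (1/a)..a, F ((-x) - 1 / (-x)))
          = ∫ x in (1/a)..a, (fun y => F (-y)) (x - 1 / x) := by
        apply intervalIntegral.integral_congr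
        intro x _
        simp only
        congr 1
        rw [div_neg]; ring
      have e4 : (∫ y in (-c)..c, |boolePhi y| * F (-y))
          = ∫ y in (-c)..c, |boolePhi (-y)| * F y := by
        have := intervalIntegral.integral_comp_neg (a := -c) (b := c)
          (fun y => |boolePhi (-y)| * F y)
        simpa using this
      rw [← e2, e3, e1, e4]
    have hsum : (∫ y in (-c)..c, |boolePhi (-y)| * F y) + (∫ y in (-c)..c, |boolePhi y| * F y)
        = ∫ y in (-c)..c, F y := by
      rw [← intervalIntegral.integral_add (boole_ii hm2 hb2 _ _) (boole_ii hm1 hb1 _ _)]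
      apply intervalIntegral.integral_congr
      intro y _
      simp only
      rw [abs_of_pos (boolePhi_pos (-y)), abs_of_pos (boolePhi_pos y), ← add_mul,
        add_comm (boolePhi (-y)), boolePhi_add, one_mul]
    rw [← hsplit1, ← hsplit2, hpos, hneg]
    linarith [hsum]
  -- limits
  have hc : Tendsto (fun a : ℝ => a - 1/a) atTop atTop := by
    apply tendsto_atTop_mono' atTop _ (tendsto_atTop_add_const_right atTop (-1) tendsto_id)
    filter_upwards [eventually_ge_atTop (1:ℝ)] with a ha
    have : 1/a ≤ 1 := by
      rw [div_le_one (by linarith)]; exact ha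
    simp only [id]; linarith
  have h1 : Tendsto (fun a : ℝ => (1 / (2 * (a - 1/a))) * ∫ x in (-(a - 1/a))..(a - 1/a), F x)
      atTop (nhds A) := hF.comp hc
  have h2 : Tendsto (fun a : ℝ => (a - 1/a)/a) atTop (nhds 1) := by
    have hstep : Tendsto (fun a : ℝ => 1 - a⁻¹ * a⁻¹) atTop (nhds (1 - 0 * 0)) :=
      tendsto_const_nhds.sub (tendsto_inv_atTop_zero.mul tendsto_inv_atTop_zero)
    rw [show (1:ℝ) - 0 * 0 = 1 by norm_num] at hstep
    apply hstep.congr'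
    filter_upwards [eventually_gt_atTop (0:ℝ)] with a ha
    field_simp
    try ring
  have h3 : Tendsto (fun a : ℝ => (1/(2*a)) * ∫ x in (-(1/a))..(1/a), F (x - 1 / x))
      atTop (nhds 0) := by
    apply squeeze_zero_norm' (a := fun a : ℝ => C * (a⁻¹ * a⁻¹))
    · filter_upwards [eventually_gt_atTop (1:ℝ)] with a ha
      have ha0 : (0:ℝ) < a := by linarith
      have hb := intervalIntegral.norm_integral_le_of_norm_le_const (C := C)
        (f := fun x => F (x - 1 / x)) (a := -(1/a)) (b := 1/a)
        (fun x _ => by simpa using hTb x)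
      have h1a : (0:ℝ) < 1/a := by positivity
      have habs : |1/a - (-(1/a))| = 2/a := by
        rw [abs_of_pos (by linarith : (0:ℝ) < 1/a - (-(1/a)))]; ring
      rw [habs] at hb
      have h2a : ‖(1/(2*a)) * ∫ x in (-(1/a))..(1/a), F (x - 1 / x)‖
          = (1/(2*a)) * ‖∫ x in (-(1/a))..(1/a), F (x - 1 / x)‖ := by
        rw [norm_mul, Real.norm_eq_abs (1/(2*a)), abs_of_pos (by positivity)]
      rw [h2a]
      calc (1/(2*a)) * ‖∫ x in (-(1/a))..(1/a), F (x - 1 / x)‖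
          ≤ (1/(2*a)) * (C * (2/a)) :=
            mul_le_mul_of_nonneg_left hb (by positivity)
        _ = C * (a⁻¹ * a⁻¹) := by field_simp
    · have := (tendsto_const_nhds (x := C)).mul (tendsto_inv_atTop_zero.mul tendsto_inv_atTop_zero)
      simpa using this
  have hlim : Tendsto (fun a : ℝ =>
      ((a - 1/a)/a) * ((1 / (2 * (a - 1/a))) * ∫ x in (-(a - 1/a))..(a - 1/a), F x)
      + (1/(2*a)) * ∫ x in (-(1/a))..(1/a), F (x - 1 / x)) atTop (nhds A) := by
    have := (h2.mul h1).add h3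
    simpa using this
  apply hlim.congr'
  filter_upwards [eventually_gt_atTop (1:ℝ)] with a ha
  have ha0 : (0:ℝ) < a := by linarith
  have hcpos : 0 < a - 1/a := by
    have : 1/a < 1 := by rw [div_lt_one ha0]; exact ha
    linarith
  have hcne : a - 1/a ≠ 0 := ne_of_gt hcpos
  set J := ∫ x in (-(a - 1/a))..(a - 1/a), F x with hJ
  set M := ∫ x in (-(1/a))..(1/a), F (x - 1 / x) with hM
  rw [key a ha]
  have hh : ((a - 1/a)/a) * (1/(2*(a-1/a))) = 1/(2*a) := by
    rw [div_mul_div_comm, div_eq_div_iff (by positivity : (0:ℝ) < a*(2*(a-1/a))).ne'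
      (by positivity : (0:ℝ) < 2*a).ne']
    ring
  rw [← mul_assoc, hh]
  ring
end

section
/- The folded Boole map T̃ : (0,∞) → [0,∞), defined by T̃(x) = x - 1/x for x ≥ 1 and T̃(x) = 1/x - x for 0 < x ≤ 1, preserves Lebesgue measure on (0,∞). -/
open MeasureTheory Set

noncomputable def sF (y : ℝ) : ℝ := Real.sqrt (y^2 + 4)
noncomputable def g1 (y : ℝ) : ℝ := (y + sF y) / 2
noncomputable def g2 (y : ℝ) : ℝ := (sF y - y) / 2

lemma sF_pos (y : ℝ) : 0 < sF y := Real.sqrt_pos.2 (by positivity)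
lemma sF_sq (y : ℝ) : sF y ^ 2 = y ^ 2 + 4 := Real.sq_sqrt (by positivity)
lemma abs_lt_sF (y : ℝ) : |y| < sF y := by
  rw [sF, ← Real.sqrt_sq_eq_abs]
  exact Real.sqrt_lt_sqrt (sq_nonneg y) (by linarith)
lemma g1_pos (y : ℝ) : 0 < g1 y := by
  have h1 := abs_lt_sF y; have h2 := neg_abs_le y; unfold g1; linarith
lemma g2_pos (y : ℝ) : 0 < g2 y := by
  have h1 := abs_lt_sF y; have h2 := le_abs_self y; unfold g2; linarith
lemma g1_mul_g2 (y : ℝ) : g1 y * g2 y = 1 := by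
  have h := sF_sq y; unfold g1 g2; nlinarith
lemma g1_sub_g2 (y : ℝ) : g1 y - g2 y = y := by unfold g1 g2; ring
lemma g2_eq_inv (y : ℝ) : g2 y = (g1 y)⁻¹ := (inv_eq_of_mul_eq_one_right (g1_mul_g2 y)).symm
lemma g1_eq_inv (y : ℝ) : g1 y = (g2 y)⁻¹ :=
  (inv_eq_of_mul_eq_one_right (by rw [mul_comm]; exact g1_mul_g2 y)).symm
lemma g1_gt_one {y : ℝ} (hy : 0 < y) : 1 < g1 y := by
  have h := sF_sq y; have hp := sF_pos y
  have : 2 - y < sF y := by nlinarith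
  unfold g1; linarith
lemma g2_lt_one {y : ℝ} (hy : 0 < y) : g2 y < 1 := by
  nlinarith [g1_mul_g2 y, g1_gt_one hy, g2_pos y]
lemma g1_inj : Function.Injective g1 := fun a b h => by
  have ha := g1_sub_g2 a; have hb := g1_sub_g2 b
  rw [g2_eq_inv] at ha hb
  rw [← ha, ← hb, h]
lemma g2_inj : Function.Injective g2 := fun a b h => by
  have ha := g1_sub_g2 a; have hb := g1_sub_g2 b
  rw [g1_eq_inv] at ha hb
  rw [← ha, ← hb, h]
lemma sF_eval {x : ℝ} (hx : 0 < x) : sF (x - 1/x) = x + 1/x := by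
  unfold sF
  rw [show (x - 1/x)^2 + 4 = (x + 1/x)^2 by field_simp; ring]
  exact Real.sqrt_sq (by positivity)
lemma sF_neg (y : ℝ) : sF (-y) = sF y := by unfold sF; rw [neg_pow]; ring_nf
lemma g1_eval {x : ℝ} (hx : 0 < x) : g1 (x - 1/x) = x := by
  unfold g1; rw [sF_eval hx]; ring
lemma g2_eval {x : ℝ} (hx : 0 < x) : g2 (1/x - x) = x := by
  unfold g2
  rw [show (1/x - x) = -(x - 1/x) by ring, sF_neg, sF_eval hx]; ring
lemma hasDerivAt_sF (y : ℝ) : HasDerivAt sF (y / sF y) y := by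
  have h1 : HasDerivAt (fun y : ℝ => y^2 + 4) (2*y) y := by
    simpa using ((hasDerivAt_pow 2 y).add_const 4)
  have h2 := (Real.hasDerivAt_sqrt (x := y^2+4) (by positivity)).comp y h1
  refine h2.congr_deriv ?_
  have hs : sF y ≠ 0 := (sF_pos y).ne'
  rw [show Real.sqrt (y^2+4) = sF y from rfl]
  field_simp
lemma hasDerivAt_g1 (y : ℝ) : HasDerivAt g1 ((1 + y / sF y)/2) y := by
  have := ((hasDerivAt_id y).add (hasDerivAt_sF y)).div_const 2
  exact this
lemma hasDerivAt_g2 (y : ℝ) : HasDerivAt g2 ((y / sF y - 1)/2) y := by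
  have := ((hasDerivAt_sF y).sub (hasDerivAt_id y)).div_const 2
  exact this
lemma ratio_abs_lt (y : ℝ) : |y / sF y| < 1 := by
  rw [abs_div, abs_of_pos (sF_pos y), div_lt_one (sF_pos y)]
  exact abs_lt_sF y
lemma cont_sF : Continuous sF := by
  unfold sF; exact Real.continuous_sqrt.comp (by continuity)
lemma cont_g1 : Continuous g1 := (continuous_id.add cont_sF).div_const 2
lemma cont_g2 : Continuous g2 := (cont_sF.sub continuous_id).div_const 2

lemma cont_d1 : Continuous fun y : ℝ => (1 + y / sF y)/2 :=
  (continuous_const.add (continuous_id.div cont_sF fun y => (sF_pos y).ne')).div_const 2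
lemma cont_d2 : Continuous fun y : ℝ => (y / sF y - 1)/2 :=
  ((continuous_id.div cont_sF fun y => (sF_pos y).ne').sub continuous_const).div_const 2

theorem folded_boole_measure_preserving
    (T : ℝ → ℝ) (hT : ∀ x : ℝ, 0 < x → T x = if 1 ≤ x then x - 1 / x else 1 / x - x)
    (A : Set ℝ) (hA : MeasurableSet A) (hA' : A ⊆ Set.Ioi 0) :
    volume (T ⁻¹' A ∩ Set.Ioi 0) = volume A := by
  have hAp : ∀ y ∈ A, (0:ℝ) < y := fun y hy => hA' hy
  have hset : T ⁻¹' A ∩ Set.Ioi 0 = g1 '' A ∪ g2 '' A := by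
    ext x
    simp only [Set.mem_inter_iff, Set.mem_preimage, Set.mem_Ioi, Set.mem_union, Set.mem_image]
    constructor
    · rintro ⟨hTx, hx⟩
      rw [hT x hx] at hTx
      by_cases h1 : 1 ≤ x
      · rw [if_pos h1] at hTx
        exact Or.inl ⟨x - 1/x, hTx, g1_eval hx⟩
      · rw [if_neg h1] at hTx
        exact Or.inr ⟨1/x - x, hTx, g2_eval hx⟩
    · rintro (⟨y, hy, rfl⟩ | ⟨y, hy, rfl⟩)
      · have hy0 := hAp y hy
        have h1 : 1 < g1 y := g1_gt_one hy0
        refine ⟨?_, lt_trans one_pos h1⟩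
        rw [hT _ (lt_trans one_pos h1), if_pos h1.le]
        rw [show (1:ℝ) / g1 y = g2 y by rw [one_div, ← g2_eq_inv], g1_sub_g2]
        exact hy
      · have hy0 := hAp y hy
        have h2 : g2 y < 1 := g2_lt_one hy0
        have hp := g2_pos y
        refine ⟨?_, hp⟩
        rw [hT _ hp, if_neg (not_le.2 h2)]
        rw [show (1:ℝ) / g2 y = g1 y by rw [one_div, ← g1_eq_inv], g1_sub_g2]
        exact hy
  rw [hset]
  have hm1 : MeasurableSet (g1 '' A) :=
    hA.image_of_continuousOn_injOn cont_g1.continuousOn g1_inj.injOn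
  have hm2 : MeasurableSet (g2 '' A) :=
    hA.image_of_continuousOn_injOn cont_g2.continuousOn g2_inj.injOn
  have hdisj : Disjoint (g1 '' A) (g2 '' A) := by
    rw [Set.disjoint_left]
    rintro x ⟨y, hy, rfl⟩ ⟨z, hz, hzx⟩
    have h1 := g1_gt_one (hAp y hy)
    have h2 := g2_lt_one (hAp z hz)
    rw [hzx] at h2
    linarith
  rw [measure_union hdisj hm2]
  have h1 : volume (g1 '' A) = ∫⁻ y in A, ENNReal.ofReal |(1 + y / sF y)/2| := by
    rw [← MeasureTheory.lintegral_abs_det_fderiv_eq_addHaar_image volume hA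
        (f' := fun y => (1 : ℝ →L[ℝ] ℝ).smulRight ((1 + y / sF y)/2))
        (fun y _ => ((hasDerivAt_g1 y).hasDerivWithinAt).hasFDerivWithinAt)
        g1_inj.injOn]
    simp_rw [ContinuousLinearMap.det_smulRight, ContinuousLinearMap.one_apply, one_mul]
  have h2 : volume (g2 '' A) = ∫⁻ y in A, ENNReal.ofReal |(y / sF y - 1)/2| := by
    rw [← MeasureTheory.lintegral_abs_det_fderiv_eq_addHaar_image volume hA
        (f' := fun y => (1 : ℝ →L[ℝ] ℝ).smulRight ((y / sF y - 1)/2))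
        (fun y _ => ((hasDerivAt_g2 y).hasDerivWithinAt).hasFDerivWithinAt)
        g2_inj.injOn]
    simp_rw [ContinuousLinearMap.det_smulRight, ContinuousLinearMap.one_apply, one_mul]
  rw [h1, h2, ← MeasureTheory.lintegral_add_left
    (Measurable.ennreal_ofReal cont_d1.abs.measurable)]
  have hpt : ∀ y : ℝ, ENNReal.ofReal |(1 + y / sF y)/2| + ENNReal.ofReal |(y / sF y - 1)/2|
      = 1 := by
    intro y
    have ht := abs_lt.1 (ratio_abs_lt y)
    rw [abs_of_nonneg (by linarith : (0:ℝ) ≤ (1 + y / sF y)/2),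
      abs_of_nonpos (by linarith : (y / sF y - 1)/2 ≤ 0),
      ← ENNReal.ofReal_add (by linarith) (by linarith),
      show (1 + y / sF y)/2 + -((y / sF y - 1)/2) = 1 by ring, ENNReal.ofReal_one]
  simp_rw [hpt]
  simp
end

section
/- The function h(x) := √(x²+4)·(√(x²+4) - x)² - 8 satisfies h(0) = 0 and h'(x) < 0 for all x > 0; in particular h(x) < 0 for all x > 0. -/
theorem aux_function_negative
    (h : ℝ → ℝ)
    (hdef : ∀ x : ℝ, h x = Real.sqrt (x ^ 2 + 4) * (Real.sqrt (x ^ 2 + 4) - x) ^ 2 - 8) :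
    h 0 = 0 ∧ (∀ x : ℝ, 0 < x → deriv h x < 0) ∧ ∀ x : ℝ, 0 < x → h x < 0 := by
  have hfun : h = fun x : ℝ => Real.sqrt (x ^ 2 + 4) * (Real.sqrt (x ^ 2 + 4) - x) ^ 2 - 8 :=
    funext hdef
  have hsqrt4 : Real.sqrt ((0:ℝ) ^ 2 + 4) = 2 := by
    rw [show ((0:ℝ)^2 + 4) = 2^2 by norm_num, Real.sqrt_sq (by norm_num)]
  refine ⟨by rw [hdef 0, hsqrt4]; norm_num, ?_, ?_⟩
  · intro x hx
    set s := Real.sqrt (x ^ 2 + 4) with hs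
    have hs2 : s ^ 2 = x ^ 2 + 4 := Real.sq_sqrt (by positivity)
    have hs0 : 0 < s := Real.sqrt_pos.mpr (by positivity)
    have hsx : x < s := by
      rw [hs]
      exact (Real.lt_sqrt hx.le).mpr (by nlinarith)
    have hderiv : HasDerivAt (fun x : ℝ => Real.sqrt (x ^ 2 + 4)) (x / s) x := by
      have h1 : HasDerivAt (fun x : ℝ => x ^ 2 + 4) (2 * x) x := by
        simpa using ((hasDerivAt_pow 2 x).add_const 4)
      have h2 := (Real.hasDerivAt_sqrt (by positivity : x ^ 2 + 4 ≠ 0)).comp x h1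
      refine h2.congr_deriv ?_
      rw [← hs, div_mul_eq_mul_div, one_mul, mul_div_mul_left _ _ (two_ne_zero' ℝ)]
    have hD : HasDerivAt h
        (x / s * (s - x) ^ 2 + s * (2 * (s - x) ^ 1 * (x / s - 1))) x := by
      rw [hfun]
      exact ((hderiv.mul ((hderiv.sub (hasDerivAt_id x)).pow 2)).sub_const 8)
    rw [hD.deriv]
    have heq : x / s * (s - x) ^ 2 + s * (2 * (s - x) ^ 1 * (x / s - 1))
        = (s - x) ^ 2 * (x - 2 * s) / s := by
      field_simp
      ring
    rw [heq]
    apply div_neg_of_neg_of_pos _ hs0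
    have h1 : (0:ℝ) < (s - x) ^ 2 := pow_pos (by linarith) 2
    nlinarith
  · intro x hx
    rw [hdef x]
    set s := Real.sqrt (x ^ 2 + 4) with hs
    have hs2 : s ^ 2 = x ^ 2 + 4 := Real.sq_sqrt (by positivity)
    have hs0 : 0 < s := Real.sqrt_pos.mpr (by positivity)
    have hsx : x < s := by
      rw [hs]
      exact (Real.lt_sqrt hx.le).mpr (by nlinarith)
    nlinarith [sq_nonneg (s - x ^ 2 - 2), mul_pos hx hs0, sq_nonneg (s - x), mul_pos (mul_pos hx hx) hs0]
end

section
/- For all x ∈ (0,5), 3φ₁''(x) - (φ₁'(x))² + φ₁'(x) > 0, where φ₁(x) = (-x+√(x²+4))/2, φ₁'(x) = -1/2 + x/(2√(x²+4)), φ₁''(x) = 2/(x²+4)^{3/2}. Equivalently, (x²+4)^{3/2} - √(x²+4)(2√(x²+4) - x)² + 24 > 0 for 0 < x < 5. -/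
open Real

private lemma sqrt_deriv (y : ℝ) :
    HasDerivAt (fun y : ℝ => Real.sqrt (y ^ 2 + 4)) (y / Real.sqrt (y ^ 2 + 4)) y := by
  have h4 : (y ^ 2 + 4 : ℝ) ≠ 0 := by positivity
  have hinner : HasDerivAt (fun y : ℝ => y ^ 2 + 4) (2 * y) y := by
    simpa using (hasDerivAt_pow 2 y).add_const 4
  have := (Real.hasDerivAt_sqrt h4).comp y hinner
  have hs : Real.sqrt (y ^ 2 + 4) ≠ 0 := by positivity
  refine this.congr_deriv ?_
  field_simp

private lemma phi_deriv (y : ℝ) :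
    HasDerivAt (fun y : ℝ => (-y + Real.sqrt (y ^ 2 + 4)) / 2)
      ((-1 + y / Real.sqrt (y ^ 2 + 4)) / 2) y := by
  exact ((hasDerivAt_id y).neg.add (sqrt_deriv y)).div_const 2

private lemma phi_deriv_eq :
    deriv (fun y : ℝ => (-y + Real.sqrt (y ^ 2 + 4)) / 2)
      = fun y : ℝ => (-1 + y / Real.sqrt (y ^ 2 + 4)) / 2 :=
  funext fun y => (phi_deriv y).deriv

private lemma phi_deriv2 (y : ℝ) :
    HasDerivAt (fun y : ℝ => (-1 + y / Real.sqrt (y ^ 2 + 4)) / 2)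
      ((1 * Real.sqrt (y ^ 2 + 4) - y * (y / Real.sqrt (y ^ 2 + 4))) /
        (Real.sqrt (y ^ 2 + 4)) ^ 2 / 2) y := by
  have hs : Real.sqrt (y ^ 2 + 4) ≠ 0 := by positivity
  exact (((hasDerivAt_id y).div (sqrt_deriv y) hs).const_add (-1)).div_const 2

theorem folded_boole_A2 (x : ℝ) (hx : x ∈ Set.Ioo (0 : ℝ) 5) :
    3 * deriv (deriv (fun y : ℝ => (-y + Real.sqrt (y ^ 2 + 4)) / 2)) x -
      (deriv (fun y : ℝ => (-y + Real.sqrt (y ^ 2 + 4)) / 2) x) ^ 2 +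
      deriv (fun y : ℝ => (-y + Real.sqrt (y ^ 2 + 4)) / 2) x > 0 ∧
    (x ^ 2 + 4) ^ ((3 : ℝ) / 2) -
      Real.sqrt (x ^ 2 + 4) * (2 * Real.sqrt (x ^ 2 + 4) - x) ^ 2 + 24 > 0 := by
  obtain ⟨hx0, hx5⟩ := hx
  set s := Real.sqrt (x ^ 2 + 4) with hs_def
  have hs0 : 0 < s := Real.sqrt_pos.mpr (by positivity)
  have hsq : s ^ 2 = x ^ 2 + 4 := Real.sq_sqrt (by positivity)
  -- key inequality
  have hcube : (x ^ 3 + 4 * x + 6) ^ 2 > (x ^ 2 + 4) * (x ^ 2 + 3) ^ 2 := by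
    nlinarith [sq_nonneg (4 * x - 17), mul_pos hx0 hx0, mul_pos (mul_pos hx0 hx0) hx0,
      mul_nonneg (mul_nonneg (le_of_lt hx0) (le_of_lt hx0)) (by linarith : (0:ℝ) ≤ 5 - x)]
  have hs1 : s * (x ^ 2 + 3) < x ^ 3 + 4 * x + 6 := by
    have hb : (0:ℝ) < x ^ 3 + 4 * x + 6 := by positivity
    have h2 : (s * (x ^ 2 + 3)) ^ 2 < (x ^ 3 + 4 * x + 6) ^ 2 := by
      have : (s * (x ^ 2 + 3)) ^ 2 = (x ^ 2 + 4) * (x ^ 2 + 3) ^ 2 := by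
        rw [mul_pow, hsq]
      linarith
    exact lt_of_pow_lt_pow_left₀ 2 hb.le h2
  have key : 0 < 24 + 4 * x ^ 3 + 16 * x - s * (4 * x ^ 2 + 12) := by nlinarith
  constructor
  · rw [phi_deriv_eq, (phi_deriv2 x).deriv]
    rw [← hs_def]
    have hsne : s ≠ 0 := ne_of_gt hs0
    rw [gt_iff_lt]
    have heq : 3 * ((1 * s - x * (x / s)) / s ^ 2 / 2) - ((-1 + x / s) / 2) ^ 2 +
        (-1 + x / s) / 2 = (24 + 4 * x ^ 3 + 16 * x - s * (4 * x ^ 2 + 12)) / (4 * s ^ 3) := by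
      field_simp
      linear_combination (24 - 12 * s + 16 * x) * hsq
    rw [heq]
    positivity
  · have h32 : (x ^ 2 + 4 : ℝ) ^ ((3 : ℝ) / 2) = (x ^ 2 + 4) * s := by
      rw [show (3:ℝ)/2 = 1 + 1/2 by norm_num, Real.rpow_add (by positivity), Real.rpow_one,
        hs_def, Real.sqrt_eq_rpow]
    rw [h32]
    nlinarith [key, hsq, mul_pos hs0 hs0]
end

section
/- Let φ₀, φ₁ : [0,∞) → ℝ be C³ functions with φ₀' ∈ (0,1), -1/2 < φ₁' < 0, φ₀' - φ₁' = 1 (hence φ₀'' = φ₁'' and φ₀''' = φ₁'''), φ₁'' - (φ₁')² > 0, and assume for each x > 0 either (a) φ₁'''(x) + φ₁''(x) > 0 and 3φ₁''(x) - (φ₁'(x))² + φ₁'(x) > 0, or (b) φ₁'''(x) + φ₁''(x) - (φ₁'(x))² > 0. Define (Lg)(x) = φ₀'(x)·g(φ₀(x)) - φ₁'(x)·g(φ₁(x)). Then if g : (0,∞) → ℝ is C², positive, with g' < 0 and g'' + g' < 0, the function Lg is also C², positive, with (Lg)' < 0 and (Lg)'' + (Lg)' < 0. -/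
open Set

private lemma diffAt_aux {f : ℝ → ℝ} {n : WithTop ℕ∞} (hf : ContDiffOn ℝ n f (Ioi 0))
    (hn : 1 ≤ n) {x : ℝ} (hx : 0 < x) : DifferentiableAt ℝ f x :=
  (hf.differentiableOn (lt_of_lt_of_le zero_lt_one hn).ne').differentiableAt (isOpen_Ioi.mem_nhds hx)

private lemma hasDeriv1 {φ g : ℝ → ℝ} (hφ : ContDiffOn ℝ 3 φ (Ioi 0))
    (hg : ContDiffOn ℝ 2 g (Ioi 0)) (hm : MapsTo φ (Ioi 0) (Ioi 0))
    {x : ℝ} (hx : 0 < x) :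
    HasDerivAt (fun y => deriv φ y * g (φ y))
      (deriv (deriv φ) x * g (φ x) + (deriv φ x) ^ 2 * deriv g (φ x)) x := by
  have hφx : 0 < φ x := hm (mem_Ioi.mpr hx)
  have h1 : HasDerivAt φ (deriv φ x) x := (diffAt_aux hφ (by norm_num) hx).hasDerivAt
  have hd1 : ContDiffOn ℝ 2 (deriv φ) (Ioi 0) := hφ.deriv_of_isOpen isOpen_Ioi (by norm_num)
  have h2 : HasDerivAt (deriv φ) (deriv (deriv φ) x) x :=
    (diffAt_aux hd1 (by norm_num) hx).hasDerivAt
  have h3 : HasDerivAt g (deriv g (φ x)) (φ x) := (diffAt_aux hg (by norm_num) hφx).hasDerivAt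
  have h4 : HasDerivAt (fun y => g (φ y)) (deriv g (φ x) * deriv φ x) x := h3.comp x h1
  have key := h2.mul h4
  refine key.congr_deriv ?_
  ring

private lemma hasDeriv2 {φ g : ℝ → ℝ} (hφ : ContDiffOn ℝ 3 φ (Ioi 0))
    (hg : ContDiffOn ℝ 2 g (Ioi 0)) (hm : MapsTo φ (Ioi 0) (Ioi 0))
    {x : ℝ} (hx : 0 < x) :
    HasDerivAt (fun y => deriv (deriv φ) y * g (φ y) + (deriv φ y) ^ 2 * deriv g (φ y))
      (deriv (deriv (deriv φ)) x * g (φ x)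
        + 3 * deriv (deriv φ) x * deriv φ x * deriv g (φ x)
        + (deriv φ x) ^ 3 * deriv (deriv g) (φ x)) x := by
  have hφx : 0 < φ x := hm (mem_Ioi.mpr hx)
  have h1 : HasDerivAt φ (deriv φ x) x := (diffAt_aux hφ (by norm_num) hx).hasDerivAt
  have hd1 : ContDiffOn ℝ 2 (deriv φ) (Ioi 0) := hφ.deriv_of_isOpen isOpen_Ioi (by norm_num)
  have hd2 : ContDiffOn ℝ 1 (deriv (deriv φ)) (Ioi 0) :=
    hd1.deriv_of_isOpen isOpen_Ioi (by norm_num)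
  have hgd1 : ContDiffOn ℝ 1 (deriv g) (Ioi 0) := hg.deriv_of_isOpen isOpen_Ioi (by norm_num)
  have h2 : HasDerivAt (deriv φ) (deriv (deriv φ) x) x :=
    (diffAt_aux hd1 (by norm_num) hx).hasDerivAt
  have h3 : HasDerivAt (deriv (deriv φ)) (deriv (deriv (deriv φ)) x) x :=
    (diffAt_aux hd2 (by norm_num) hx).hasDerivAt
  have hg1 : HasDerivAt g (deriv g (φ x)) (φ x) := (diffAt_aux hg (by norm_num) hφx).hasDerivAt
  have hg2 : HasDerivAt (deriv g) (deriv (deriv g) (φ x)) (φ x) :=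
    (diffAt_aux hgd1 (by norm_num) hφx).hasDerivAt
  have h4 : HasDerivAt (fun y => g (φ y)) (deriv g (φ x) * deriv φ x) x := hg1.comp x h1
  have h5 : HasDerivAt (fun y => deriv g (φ y)) (deriv (deriv g) (φ x) * deriv φ x) x :=
    hg2.comp x h1
  have key := (h3.mul h4).add ((h2.pow 2).mul h5)
  refine key.congr_deriv ?_
  simp only [Pi.pow_apply]
  norm_num
  ring

set_option maxHeartbeats 1000000 in
theorem transfer_operator_cone_invariance
    (φ₀ φ₁ : ℝ → ℝ)
    (hφ₀C : ContDiffOn ℝ 3 φ₀ (Ici 0)) (hφ₁C : ContDiffOn ℝ 3 φ₁ (Ici 0))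
    (hφ₀' : ∀ x, 0 ≤ x → deriv φ₀ x ∈ Ioo (0 : ℝ) 1)
    (hφ₁' : ∀ x, 0 ≤ x → deriv φ₁ x ∈ Ioo (-(1 / 2) : ℝ) 0)
    (hsum : ∀ x, 0 ≤ x → deriv φ₀ x - deriv φ₁ x = 1)
    (hpos₁ : ∀ x, 0 ≤ x → 0 < φ₁ x)
    (horder : ∀ x, 0 < x → φ₁ x < φ₀ x)
    (hH4ii : ∀ x, 0 < x → deriv (deriv φ₁) x - (deriv φ₁ x) ^ 2 > 0)
    (hH4iii : ∀ x, 0 < x →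
      (deriv (deriv (deriv φ₁)) x + deriv (deriv φ₁) x > 0 ∧
        3 * deriv (deriv φ₁) x - (deriv φ₁ x) ^ 2 + deriv φ₁ x > 0) ∨
      deriv (deriv (deriv φ₁)) x + deriv (deriv φ₁) x - (deriv φ₁ x) ^ 2 > 0)
    (g : ℝ → ℝ)
    (hgC : ContDiffOn ℝ 2 g (Ioi 0))
    (hgpos : ∀ x, 0 < x → 0 < g x)
    (hg' : ∀ x, 0 < x → deriv g x < 0)
    (hg'' : ∀ x, 0 < x → deriv (deriv g) x + deriv g x < 0)
    (Lg : ℝ → ℝ)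
    (hLg : ∀ x, Lg x = deriv φ₀ x * g (φ₀ x) - deriv φ₁ x * g (φ₁ x)) :
    ContDiffOn ℝ 2 Lg (Ioi 0) ∧
    (∀ x, 0 < x → 0 < Lg x) ∧
    (∀ x, 0 < x → deriv Lg x < 0) ∧
    (∀ x, 0 < x → deriv (deriv Lg) x + deriv Lg x < 0) := by
  have hO : IsOpen (Ioi (0:ℝ)) := isOpen_Ioi
  have hφ₀o : ContDiffOn ℝ 3 φ₀ (Ioi 0) := hφ₀C.mono Ioi_subset_Ici_self
  have hφ₁o : ContDiffOn ℝ 3 φ₁ (Ioi 0) := hφ₁C.mono Ioi_subset_Ici_self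
  have hm₁ : MapsTo φ₁ (Ioi 0) (Ioi 0) := fun y hy => mem_Ioi.mpr (hpos₁ y (le_of_lt hy))
  have hm₀ : MapsTo φ₀ (Ioi 0) (Ioi 0) := fun y hy =>
    mem_Ioi.mpr (lt_trans (hpos₁ y (le_of_lt hy)) (horder y hy))
  have hLgfun : Lg = fun x => deriv φ₀ x * g (φ₀ x) - deriv φ₁ x * g (φ₁ x) := funext hLg
  -- smoothness
  have hC : ContDiffOn ℝ 2 Lg (Ioi 0) := by
    rw [hLgfun]
    have hd₀ : ContDiffOn ℝ 2 (deriv φ₀) (Ioi 0) := hφ₀o.deriv_of_isOpen hO (by norm_num)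
    have hd₁ : ContDiffOn ℝ 2 (deriv φ₁) (Ioi 0) := hφ₁o.deriv_of_isOpen hO (by norm_num)
    have hg₀ : ContDiffOn ℝ 2 (fun y => g (φ₀ y)) (Ioi 0) :=
      hgC.comp (hφ₀o.of_le (by norm_num)) hm₀
    have hg₁ : ContDiffOn ℝ 2 (fun y => g (φ₁ y)) (Ioi 0) :=
      hgC.comp (hφ₁o.of_le (by norm_num)) hm₁
    exact (hd₀.mul hg₀).sub (hd₁.mul hg₁)
  -- positivity
  have hPos : ∀ x, 0 < x → 0 < Lg x := by
    intro x hx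
    rw [hLg x]
    have h0 := hφ₀' x hx.le
    have h1 := hφ₁' x hx.le
    have hg0 := hgpos (φ₀ x) (hm₀ (mem_Ioi.mpr hx))
    have hg1 := hgpos (φ₁ x) (hm₁ (mem_Ioi.mpr hx))
    nlinarith [mul_pos h0.1 hg0, mul_pos (neg_pos.mpr h1.2) hg1]
  -- first derivative
  have hLd : ∀ x ∈ Ioi (0:ℝ), HasDerivAt Lg
      ((deriv (deriv φ₀) x * g (φ₀ x) + (deriv φ₀ x) ^ 2 * deriv g (φ₀ x))
        - (deriv (deriv φ₁) x * g (φ₁ x) + (deriv φ₁ x) ^ 2 * deriv g (φ₁ x))) x := by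
    intro x hx
    rw [hLgfun]
    exact (hasDeriv1 hφ₀o hgC hm₀ (mem_Ioi.mp hx)).sub (hasDeriv1 hφ₁o hgC hm₁ (mem_Ioi.mp hx))
  -- second derivative relations
  have hsum' : ∀ x ∈ Ioi (0:ℝ), deriv (deriv φ₀) x = deriv (deriv φ₁) x := by
    intro x hx
    have h1 : deriv φ₀ =ᶠ[nhds x] fun y => deriv φ₁ y + 1 :=
      Filter.eventuallyEq_of_mem (hO.mem_nhds hx) (fun y hy => by
        have := hsum y (le_of_lt (mem_Ioi.mp hy)); linarith)
    rw [h1.deriv_eq, deriv_add_const]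
  have hsum'' : ∀ x ∈ Ioi (0:ℝ), deriv (deriv (deriv φ₀)) x = deriv (deriv (deriv φ₁)) x := by
    intro x hx
    exact (Filter.eventuallyEq_of_mem (hO.mem_nhds hx) hsum').deriv_eq
  have hLd' : ∀ x ∈ Ioi (0:ℝ), deriv Lg x = deriv (deriv φ₁) x * (g (φ₀ x) - g (φ₁ x))
      + (deriv φ₁ x + 1) ^ 2 * deriv g (φ₀ x) - (deriv φ₁ x) ^ 2 * deriv g (φ₁ x) := by
    intro x hx
    rw [(hLd x hx).deriv, hsum' x hx,
      show deriv φ₀ x = deriv φ₁ x + 1 by have := hsum x (le_of_lt (mem_Ioi.mp hx)); linarith]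
    ring
  have hLdd : ∀ x, 0 < x → deriv (deriv Lg) x =
      (deriv (deriv (deriv φ₀)) x * g (φ₀ x)
        + 3 * deriv (deriv φ₀) x * deriv φ₀ x * deriv g (φ₀ x)
        + (deriv φ₀ x) ^ 3 * deriv (deriv g) (φ₀ x))
      - (deriv (deriv (deriv φ₁)) x * g (φ₁ x)
        + 3 * deriv (deriv φ₁) x * deriv φ₁ x * deriv g (φ₁ x)
        + (deriv φ₁ x) ^ 3 * deriv (deriv g) (φ₁ x)) := by
    intro x hx
    have heq : deriv Lg =ᶠ[nhds x] (fun y =>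
        (deriv (deriv φ₀) y * g (φ₀ y) + (deriv φ₀ y) ^ 2 * deriv g (φ₀ y))
          - (deriv (deriv φ₁) y * g (φ₁ y) + (deriv φ₁ y) ^ 2 * deriv g (φ₁ y))) :=
      Filter.eventuallyEq_of_mem (hO.mem_nhds (mem_Ioi.mpr hx)) (fun y hy => (hLd y hy).deriv)
    rw [heq.deriv_eq]
    exact ((hasDeriv2 hφ₀o hgC hm₀ hx).sub (hasDeriv2 hφ₁o hgC hm₁ hx)).deriv
  -- exponential monotonicity of e^t g'(t)
  have hgd : ContDiffOn ℝ 1 (deriv g) (Ioi 0) := hgC.deriv_of_isOpen hO (by norm_num)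
  have hkey : ∀ u v : ℝ, 0 < u → u ≤ v → deriv g v ≤ Real.exp (u - v) * deriv g u := by
    intro u v hu huv
    have hA : AntitoneOn (fun t => Real.exp t * deriv g t) (Ioi 0) := by
      apply antitoneOn_of_deriv_nonpos (convex_Ioi 0)
      · exact Real.continuous_exp.continuousOn.mul hgd.continuousOn
      · rw [interior_Ioi]
        exact Real.differentiable_exp.differentiableOn.mul (hgd.differentiableOn one_ne_zero)
      · intro t ht
        rw [interior_Ioi] at ht
        have h1 : HasDerivAt (fun t => Real.exp t * deriv g t)
            (Real.exp t * deriv g t + Real.exp t * deriv (deriv g) t) t :=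
          (Real.hasDerivAt_exp t).mul (diffAt_aux hgd le_rfl (mem_Ioi.mp ht)).hasDerivAt
        rw [h1.deriv]
        have h2 := hg'' t (mem_Ioi.mp ht)
        nlinarith [Real.exp_pos t]
    have h2 := hA (mem_Ioi.mpr hu) (mem_Ioi.mpr (lt_of_lt_of_le hu huv)) huv
    rw [Real.exp_sub, div_mul_eq_mul_div, le_div_iff₀ (Real.exp_pos v)]
    calc deriv g v * Real.exp v = Real.exp v * deriv g v := mul_comm _ _
      _ ≤ Real.exp u * deriv g u := h2
  -- bound on g(φ₀) - g(φ₁)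
  have hDbound : ∀ x, 0 < x →
      g (φ₀ x) - g (φ₁ x) ≤ (1 - Real.exp (φ₁ x - φ₀ x)) * deriv g (φ₁ x) := by
    intro x hx
    have h1pos : 0 < φ₁ x := hpos₁ x hx.le
    have hlt : φ₁ x < φ₀ x := horder x hx
    set F : ℝ → ℝ := fun t => g t + deriv g (φ₁ x) * Real.exp (φ₁ x - t) with hF
    have hFd : ∀ t, 0 < t → HasDerivAt F
        (deriv g t + deriv g (φ₁ x) * (Real.exp (φ₁ x - t) * (-1))) t := by
      intro t ht
      have h2 : HasDerivAt (fun y : ℝ => φ₁ x - y) (-1) t := by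
        simpa using (hasDerivAt_id t).const_sub (φ₁ x)
      exact ((diffAt_aux hgC (by norm_num) ht).hasDerivAt).add
        ((h2.exp).const_mul (deriv g (φ₁ x)))
    have hAF : AntitoneOn F (Icc (φ₁ x) (φ₀ x)) := by
      apply antitoneOn_of_deriv_nonpos (convex_Icc _ _)
      · exact fun t ht => ((hFd t (lt_of_lt_of_le h1pos ht.1)).continuousAt).continuousWithinAt
      · intro t ht
        rw [interior_Icc] at ht
        exact (hFd t (lt_trans h1pos ht.1)).differentiableAt.differentiableWithinAt
      · intro t ht
        rw [interior_Icc] at ht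
        have ht0 : 0 < t := lt_trans h1pos ht.1
        rw [(hFd t ht0).deriv]
        have h3 := hkey (φ₁ x) t h1pos (le_of_lt ht.1)
        nlinarith [h3]
    have h3 := hAF (left_mem_Icc.mpr hlt.le) (right_mem_Icc.mpr hlt.le) hlt.le
    simp only [hF] at h3
    rw [sub_self, Real.exp_zero] at h3
    nlinarith [h3]
  -- first derivative negative
  have hDneg : ∀ x, 0 < x → deriv Lg x < 0 := by
    intro x hx
    rw [hLd' x (mem_Ioi.mpr hx)]
    have hφ₁pos : 0 < φ₁ x := hpos₁ x hx.le
    have hlt : φ₁ x < φ₀ x := horder x hx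
    have haI := hφ₁' x hx.le
    have hba := hH4ii x hx
    have hDb := hDbound x hx
    have hp0b := hkey (φ₁ x) (φ₀ x) hφ₁pos hlt.le
    have hp1neg := hg' (φ₁ x) hφ₁pos
    set a := deriv φ₁ x with ha
    set b := deriv (deriv φ₁) x with hb
    set s := Real.exp (φ₁ x - φ₀ x) with hs
    set p0 := deriv g (φ₀ x) with hp0
    set p1 := deriv g (φ₁ x) with hp1
    have hs0 : 0 < s := Real.exp_pos _
    have hs1 : s < 1 := by
      rw [hs, ← Real.exp_zero]
      exact Real.exp_lt_exp.mpr (by linarith)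
    have hbpos : 0 < b := by nlinarith [sq_nonneg a]
    have hbr : 0 < b * (1 - s) + (a + 1) ^ 2 * s - a ^ 2 := by
      nlinarith [mul_pos (show (0:ℝ) < 1 - s by linarith) (show (0:ℝ) < b - a ^ 2 by linarith),
        mul_pos hs0 (show (0:ℝ) < 1 + 2 * a by linarith [haI.1])]
    have h1 : b * (g (φ₀ x) - g (φ₁ x)) ≤ b * ((1 - s) * p1) :=
      mul_le_mul_of_nonneg_left hDb hbpos.le
    have h2 : (a + 1) ^ 2 * p0 ≤ (a + 1) ^ 2 * (s * p1) :=
      mul_le_mul_of_nonneg_left hp0b (sq_nonneg _)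
    have h3 : p1 * (b * (1 - s) + (a + 1) ^ 2 * s - a ^ 2) < 0 :=
      mul_neg_of_neg_of_pos hp1neg hbr
    nlinarith [h1, h2, h3]
  -- second derivative condition
  refine ⟨hC, hPos, hDneg, ?_⟩
  intro x hx
  have hxI : x ∈ Ioi (0:ℝ) := mem_Ioi.mpr hx
  rw [hLdd x hx, hLd' x hxI, hsum' x hxI, hsum'' x hxI,
    show deriv φ₀ x = deriv φ₁ x + 1 by have := hsum x hx.le; linarith]
  have hφ₁pos : 0 < φ₁ x := hpos₁ x hx.le
  have hφ₀pos : 0 < φ₀ x := lt_trans hφ₁pos (horder x hx)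
  have hlt : φ₁ x < φ₀ x := horder x hx
  have haI := hφ₁' x hx.le
  have hba := hH4ii x hx
  have hDb := hDbound x hx
  have hp0b := hkey (φ₁ x) (φ₀ x) hφ₁pos hlt.le
  have hp1neg := hg' (φ₁ x) hφ₁pos
  have hG0 := hg'' (φ₀ x) hφ₀pos
  have hG1 := hg'' (φ₁ x) hφ₁pos
  have hcase := hH4iii x hx
  set a := deriv φ₁ x with ha
  set b := deriv (deriv φ₁) x with hb
  set c := deriv (deriv (deriv φ₁)) x with hc
  set s := Real.exp (φ₁ x - φ₀ x) with hs
  set p0 := deriv g (φ₀ x) with hp0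
  set p1 := deriv g (φ₁ x) with hp1
  set q0 := deriv (deriv g) (φ₀ x) with hq0
  set q1 := deriv (deriv g) (φ₁ x) with hq1
  have hs0 : 0 < s := Real.exp_pos _
  have hs1 : s < 1 := by
    rw [hs, ← Real.exp_zero]
    exact Real.exp_lt_exp.mpr (by linarith)
  have hbpos : 0 < b := by nlinarith [sq_nonneg a]
  have hK1 : 0 < 3 * (b - a ^ 2) - a := by nlinarith [haI.2]
  have hcbK : 0 < c + b ∧ 0 < c + b - a * (3 * b + a - a ^ 2) := by
    rcases hcase with ⟨h1, h2⟩ | h1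
    · exact ⟨h1, by nlinarith [mul_pos (neg_pos.mpr haI.2) h2]⟩
    · refine ⟨by nlinarith [sq_nonneg a], ?_⟩
      have h3 : 0 < 3 * b - a ^ 2 := by nlinarith [sq_nonneg a]
      nlinarith [mul_pos (neg_pos.mpr haI.2) h3]
  obtain ⟨hcbpos, hK0⟩ := hcbK
  have hK : 0 < (c + b) * (1 - s) + (a + 1) * (3 * b - (a + 1) * a) * s
      - a * (3 * b + a - a ^ 2) := by
    nlinarith [mul_pos (show (0:ℝ) < 1 - s by linarith) hK0, mul_pos hs0 hK1]
  have h1 : (c + b) * (g (φ₀ x) - g (φ₁ x)) ≤ (c + b) * ((1 - s) * p1) :=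
    mul_le_mul_of_nonneg_left hDb hcbpos.le
  have hcoef : 0 ≤ (a + 1) * (3 * b - (a + 1) * a) := by nlinarith [haI.1, haI.2]
  have h2 : (a + 1) * (3 * b - (a + 1) * a) * p0 ≤ (a + 1) * (3 * b - (a + 1) * a) * (s * p1) :=
    mul_le_mul_of_nonneg_left hp0b hcoef
  have h3 : p1 * ((c + b) * (1 - s) + (a + 1) * (3 * b - (a + 1) * a) * s
      - a * (3 * b + a - a ^ 2)) < 0 := mul_neg_of_neg_of_pos hp1neg hK
  have h4 : (a + 1) ^ 3 * (q0 + p0) < 0 :=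
    mul_neg_of_pos_of_neg (pow_pos (by linarith [haI.1]) 3) hG0
  have h5 : 0 < a ^ 3 * (q1 + p1) :=
    mul_pos_of_neg_of_neg ((Odd.pow_neg ⟨1, by norm_num⟩ haI.2)) hG1
  nlinarith [h1, h2, h3, h4, h5]
end

section
/- Let P be the Perron-Frobenius operator of the Boole map T(x) = x - 1/x with respect to Lebesgue measure, given by (Pg)(x) = φ₊'(x) g(φ₊(x)) + |φ₋'(x)| g(φ₋(x)) with φ±(x) = x/2 ± √(x²/4+1). If g ∈ L¹(ℝ) is C² on ℝ\{0}, even, positive, and satisfies g'(x) < 0 and g''(x) + g'(x) < 0 for all x > 0, then Pg has the same properties (even, positive, C² off 0, (Pg)' < 0 and (Pg)'' + (Pg)' < 0 on (0,∞)). -/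
open Set MeasureTheory

noncomputable def bSq (x : ℝ) : ℝ := Real.sqrt (x ^ 2 / 4 + 1)
noncomputable def bP (x : ℝ) : ℝ := x / 2 + bSq x
noncomputable def bM (x : ℝ) : ℝ := x / 2 - bSq x
noncomputable def bDP (x : ℝ) : ℝ := 1/2 + x / (4 * bSq x)
noncomputable def bDM (x : ℝ) : ℝ := 1/2 - x / (4 * bSq x)
noncomputable def bS2 (x : ℝ) : ℝ := 1 / (4 * bSq x ^ 3)
noncomputable def bS3 (x : ℝ) : ℝ := -3 * x / (16 * bSq x ^ 5)

lemma bSq_pos (x : ℝ) : 0 < bSq x := Real.sqrt_pos.2 (by positivity)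

lemma bSq_sq (x : ℝ) : bSq x ^ 2 = x ^ 2 / 4 + 1 := Real.sq_sqrt (by positivity)

lemma bSq_one_le (x : ℝ) : 1 ≤ bSq x := by
  rw [show (1:ℝ) = Real.sqrt 1 by simp [Real.sqrt_one]]
  exact Real.sqrt_le_sqrt (by nlinarith [sq_nonneg x])

lemma lt_two_bSq (x : ℝ) : x < 2 * bSq x := by
  nlinarith [bSq_sq x, bSq_pos x, sq_nonneg (x - 2 * bSq x)]

lemma neg_lt_two_bSq (x : ℝ) : -x < 2 * bSq x := by
  nlinarith [bSq_sq x, bSq_pos x, sq_nonneg (x + 2 * bSq x)]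

lemma bP_pos (x : ℝ) : 0 < bP x := by
  have := neg_lt_two_bSq x; unfold bP; linarith

lemma bM_neg (x : ℝ) : bM x < 0 := by
  have := lt_two_bSq x; unfold bM; linarith

lemma bDP_pos (x : ℝ) : 0 < bDP x := by
  have h := bSq_pos x; have := neg_lt_two_bSq x
  unfold bDP
  rw [div_add_div _ _ (by norm_num) (by positivity)]
  apply div_pos (by nlinarith) (by positivity)

lemma bDM_pos (x : ℝ) : 0 < bDM x := by
  have h := bSq_pos x; have := lt_two_bSq x
  unfold bDM
  rw [div_sub_div _ _ (by norm_num) (by positivity)]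
  apply div_pos (by nlinarith) (by positivity)

lemma hasDerivAt_bSq (x : ℝ) : HasDerivAt bSq (x / (4 * bSq x)) x := by
  have h1 : HasDerivAt (fun x : ℝ => x ^ 2 / 4 + 1) (x / 2) x := by
    have := ((hasDerivAt_pow 2 x).div_const 4).add_const 1
    exact this.congr_deriv (by norm_num; ring)
  have h2 := (Real.hasDerivAt_sqrt (x := x ^ 2 / 4 + 1) (by positivity)).comp x h1
  refine h2.congr_deriv ?_
  change 1 / (2 * bSq x) * (x / 2) = x / (4 * bSq x)
  ring

lemma hasDerivAt_bP (x : ℝ) : HasDerivAt bP (bDP x) x := by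
  exact ((hasDerivAt_id x).div_const 2).add (hasDerivAt_bSq x)

lemma hasDerivAt_bM (x : ℝ) : HasDerivAt bM (bDM x) x := by
  exact ((hasDerivAt_id x).div_const 2).sub (hasDerivAt_bSq x)

lemma hasDerivAt_inner (x : ℝ) : HasDerivAt (fun x => x / (4 * bSq x)) (1 / (4 * bSq x ^ 3)) x := by
  have hs := bSq_pos x
  have h := (hasDerivAt_id x).div ((hasDerivAt_bSq x).const_mul 4) (by positivity)
  refine h.congr_deriv ?_
  have h2 := bSq_sq x
  field_simp
  simp only [id_eq]
  linear_combination 4 * h2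

lemma hasDerivAt_bDP (x : ℝ) : HasDerivAt bDP (bS2 x) x := by
  have := (hasDerivAt_inner x).const_add (1/2 : ℝ)
  unfold bDP bS2
  convert this using 1

lemma hasDerivAt_bDM (x : ℝ) : HasDerivAt bDM (-bS2 x) x := by
  have := (hasDerivAt_inner x).const_sub (1/2 : ℝ)
  unfold bDM bS2
  convert this using 1

lemma hasDerivAt_bS2 (x : ℝ) : HasDerivAt bS2 (bS3 x) x := by
  have hs := bSq_pos x
  have h : HasDerivAt (fun x => 4 * bSq x ^ 3) (4 * (3 * bSq x ^ 2 * (x / (4 * bSq x)))) x :=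
    ((hasDerivAt_bSq x).pow 3).const_mul 4
  have h2 := h.inv (by positivity)
  have he : bS2 = fun x => (4 * bSq x ^ 3)⁻¹ := by
    funext t; simp [bS2, one_div]
  rw [he]
  refine h2.congr_deriv ?_
  rw [bS3]
  field_simp
  ring

lemma boole_ids (x s y : ℝ) (hs0 : 0 < s) (hy0 : 0 < y) (hy : y = x / 2 + s)
    (hsq : s ^ 2 = x ^ 2 / 4 + 1) :
    x / 2 - s = -(1 / y) ∧
    1/2 + x / (4 * s) = y ^ 2 / (y ^ 2 + 1) ∧
    1/2 - x / (4 * s) = 1 / (y ^ 2 + 1) ∧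
    1 / (4 * s ^ 3) = 2 * y ^ 3 / (y ^ 2 + 1) ^ 3 ∧
    -3 * x / (16 * s ^ 5) = -(6 * y ^ 4 * (y ^ 2 - 1)) / (y ^ 2 + 1) ^ 5 := by
  have hs' : s = y - x / 2 := by linarith
  have hxy : x * y = y ^ 2 - 1 := by
    linear_combination (-1) * hsq + (s + y - x / 2) * hs'
  have hx : x = (y ^ 2 - 1) / y := by
    field_simp; linear_combination hxy
  have hsy : s = (y ^ 2 + 1) / (2 * y) := by
    field_simp; linear_combination 2 * y * hs' - hxy
  subst hx
  subst hsy
  have h1 : y ^ 2 + 1 ≠ 0 := by positivity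
  have h2 : y ≠ 0 := hy0.ne'
  refine ⟨by field_simp; ring, by field_simp; ring, by field_simp; ring,
    by field_simp; ring, by field_simp; ring⟩

lemma bP_mono : StrictMono bP :=
  strictMono_of_deriv_pos fun x => by rw [(hasDerivAt_bP x).deriv]; exact bDP_pos x

lemma bM_mono : StrictMono bM :=
  strictMono_of_deriv_pos fun x => by rw [(hasDerivAt_bM x).deriv]; exact bDM_pos x

lemma bP_image : bP '' univ = Ioi 0 := by
  rw [image_univ]
  ext t
  constructor
  · rintro ⟨x, rfl⟩; exact bP_pos x
  · intro ht
    have ht0 : (0:ℝ) < t := ht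
    refine ⟨t - 1/t, ?_⟩
    have hq : (t - 1/t) ^ 2 / 4 + 1 = ((t + 1/t)/2) ^ 2 := by
      field_simp; ring
    have hnn : (0:ℝ) ≤ (t + 1/t)/2 := by positivity
    unfold bP bSq
    rw [hq, Real.sqrt_sq hnn]
    field_simp
    ring

lemma bM_image : bM '' univ = Iio 0 := by
  rw [image_univ]
  ext t
  constructor
  · rintro ⟨x, rfl⟩; exact bM_neg x
  · intro ht
    have ht0 : t < 0 := ht
    refine ⟨t - 1/t, ?_⟩
    have htne : t ≠ 0 := ht0.ne
    have hq : (t - 1/t) ^ 2 / 4 + 1 = (-((t + 1/t)/2)) ^ 2 := by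
      field_simp; ring
    have hneg : t + 1/t < 0 := by
      have h1 : t + 1/t = (t^2 + 1)/t := by field_simp
      rw [h1]
      exact div_neg_of_pos_of_neg (by positivity) ht0
    have hnn : (0:ℝ) ≤ -((t + 1/t)/2) := by linarith
    unfold bM bSq
    rw [hq, Real.sqrt_sq hnn]
    field_simp
    ring

section
variable {g : ℝ → ℝ} (hgC : ContDiffOn ℝ 2 g ({0}ᶜ : Set ℝ))

include hgC in
lemma gCAt (t : ℝ) (ht : t ≠ 0) : ContDiffAt ℝ 2 g t :=
  hgC.contDiffAt (isOpen_compl_singleton.mem_nhds (by simpa using ht))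

include hgC in
lemma hasDerivAt_g (t : ℝ) (ht : t ≠ 0) : HasDerivAt g (deriv g t) t :=
  ((gCAt hgC t ht).differentiableAt (by norm_num)).hasDerivAt

include hgC in
lemma gderivC : ContDiffOn ℝ 1 (deriv g) ({0}ᶜ : Set ℝ) :=
  hgC.deriv_of_isOpen isOpen_compl_singleton (by norm_num)

include hgC in
lemma hasDerivAt_dg (t : ℝ) (ht : t ≠ 0) : HasDerivAt (deriv g) (deriv (deriv g) t) t :=
  ((((gderivC hgC).contDiffAt
      (isOpen_compl_singleton.mem_nhds (by simpa using ht)))).differentiableAt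
    (by norm_num)).hasDerivAt

include hgC in
lemma deriv_g_odd (hgeven : ∀ x, g (-x) = g x) (t : ℝ) (ht : t ≠ 0) :
    deriv g (-t) = -deriv g t := by
  have h1 : HasDerivAt g (deriv g (-t)) (-t) := hasDerivAt_g hgC (-t) (by simpa using ht)
  have h2 : HasDerivAt (fun x => g (-x)) (deriv g (-t) * (-1)) t := by
    exact h1.comp t (hasDerivAt_neg t)
  rw [funext hgeven] at h2
  have h3 := hasDerivAt_g hgC t ht
  have := h2.unique h3
  linarith

include hgC in
lemma deriv2_g_even (hgeven : ∀ x, g (-x) = g x) (t : ℝ) (ht : t ≠ 0) :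
    deriv (deriv g) (-t) = deriv (deriv g) t := by
  have h1 : HasDerivAt (deriv g) (deriv (deriv g) (-t)) (-t) :=
    hasDerivAt_dg hgC (-t) (by simpa using ht)
  have h2 : HasDerivAt (fun x => deriv g (-x)) (deriv (deriv g) (-t) * (-1)) t := by
    exact h1.comp t (hasDerivAt_neg t)
  have h4 : (fun x => deriv g (-x)) =ᶠ[nhds t] (fun x => -deriv g x) := by
    filter_upwards [isOpen_compl_singleton.mem_nhds (by simpa using ht)] with x hx
    exact deriv_g_odd hgC hgeven x (by simpa using hx)
  have h5 : HasDerivAt (fun x => -deriv g x) (deriv (deriv g) (-t) * (-1)) t :=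
    h2.congr_of_eventuallyEq h4.symm
  have h6 : HasDerivAt (fun x => -deriv g x) (-(deriv (deriv g) t)) t :=
    (hasDerivAt_dg hgC t ht).neg
  have := h5.unique h6
  linarith

noncomputable def bE (g : ℝ → ℝ) (x : ℝ) : ℝ :=
  bS2 x * (g (bP x) - g (bM x)) + bDP x ^ 2 * deriv g (bP x) + bDM x ^ 2 * deriv g (bM x)

noncomputable def bE2 (g : ℝ → ℝ) (x : ℝ) : ℝ :=
  bS3 x * (g (bP x) - g (bM x))
    + 3 * bS2 x * (bDP x * deriv g (bP x) - bDM x * deriv g (bM x))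
    + bDP x ^ 3 * deriv (deriv g) (bP x) + bDM x ^ 3 * deriv (deriv g) (bM x)

include hgC in
lemma hasDerivAt_gbP (x : ℝ) :
    HasDerivAt (fun x => g (bP x)) (deriv g (bP x) * bDP x) x :=
  (hasDerivAt_g hgC (bP x) (bP_pos x).ne').comp x (hasDerivAt_bP x)

include hgC in
lemma hasDerivAt_gbM (x : ℝ) :
    HasDerivAt (fun x => g (bM x)) (deriv g (bM x) * bDM x) x :=
  (hasDerivAt_g hgC (bM x) (bM_neg x).ne).comp x (hasDerivAt_bM x)

include hgC in
lemma hasDerivAt_dgbP (x : ℝ) :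
    HasDerivAt (fun x => deriv g (bP x)) (deriv (deriv g) (bP x) * bDP x) x :=
  (hasDerivAt_dg hgC (bP x) (bP_pos x).ne').comp x (hasDerivAt_bP x)

include hgC in
lemma hasDerivAt_dgbM (x : ℝ) :
    HasDerivAt (fun x => deriv g (bM x)) (deriv (deriv g) (bM x) * bDM x) x :=
  (hasDerivAt_dg hgC (bM x) (bM_neg x).ne).comp x (hasDerivAt_bM x)

include hgC in
lemma hasDerivAt_bPg (x : ℝ) :
    HasDerivAt (fun x => bDP x * g (bP x) + bDM x * g (bM x)) (bE g x) x := by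
  have h := ((hasDerivAt_bDP x).mul (hasDerivAt_gbP hgC x)).add
    ((hasDerivAt_bDM x).mul (hasDerivAt_gbM hgC x))
  refine h.congr_deriv ?_
  unfold bE; ring

include hgC in
lemma hasDerivAt_bE (x : ℝ) : HasDerivAt (bE g) (bE2 g x) x := by
  have h1 := (hasDerivAt_bS2 x).mul ((hasDerivAt_gbP hgC x).sub (hasDerivAt_gbM hgC x))
  have h2 := ((hasDerivAt_bDP x).pow 2).mul (hasDerivAt_dgbP hgC x)
  have h3 := ((hasDerivAt_bDM x).pow 2).mul (hasDerivAt_dgbM hgC x)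
  have h := (h1.add h2).add h3
  refine h.congr_deriv ?_
  unfold bE2; simp only [Pi.sub_apply, Pi.pow_apply]; ring

include hgC in
lemma keyA (hg'' : ∀ x, 0 < x → deriv (deriv g) x + deriv g x < 0)
    (u t : ℝ) (hu : 0 < u) (hut : u < t) :
    Real.exp t * deriv g t < Real.exp u * deriv g u := by
  have hsub : Icc u t ⊆ ({0}ᶜ : Set ℝ) := fun r hr => by
    simp only [mem_compl_iff, mem_singleton_iff]
    exact ne_of_gt (lt_of_lt_of_le hu hr.1)
  have H : StrictAntiOn (fun r => Real.exp r * deriv g r) (Icc u t) := by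
    apply strictAntiOn_of_deriv_neg (convex_Icc u t)
    · exact Real.continuous_exp.continuousOn.mul (((gderivC hgC).continuousOn).mono hsub)
    · intro r hr
      rw [interior_Icc] at hr
      have hr0 : 0 < r := lt_trans hu hr.1
      have hD : HasDerivAt (fun r => Real.exp r * deriv g r)
          (Real.exp r * deriv g r + Real.exp r * deriv (deriv g) r) r := by
        have h := (Real.hasDerivAt_exp r).mul (hasDerivAt_dg hgC r hr0.ne')
        exact h
      rw [hD.deriv]
      have h2 := hg'' r hr0
      nlinarith [Real.exp_pos r]
  exact H ⟨le_refl u, le_of_lt hut⟩ ⟨le_of_lt hut, le_refl t⟩ hut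

include hgC in
lemma keyA' (hg'' : ∀ x, 0 < x → deriv (deriv g) x + deriv g x < 0)
    (u t : ℝ) (hu : 0 < u) (hut : u < t) :
    deriv g t < Real.exp (u - t) * deriv g u := by
  have h := keyA hgC hg'' u t hu hut
  have h2 := mul_lt_mul_of_pos_left h (Real.exp_pos (-t))
  calc deriv g t = Real.exp (-t) * (Real.exp t * deriv g t) := by
        rw [← mul_assoc, ← Real.exp_add]; simp
    _ < Real.exp (-t) * (Real.exp u * deriv g u) := h2
    _ = Real.exp (u - t) * deriv g u := by
        rw [← mul_assoc, ← Real.exp_add]; ring_nf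

include hgC in
lemma keyB (hg'' : ∀ x, 0 < x → deriv (deriv g) x + deriv g x < 0)
    (u t : ℝ) (hu : 0 < u) (hut : u < t) :
    g t - g u ≤ deriv g u * (1 - Real.exp (u - t)) := by
  have hsub : Icc u t ⊆ ({0}ᶜ : Set ℝ) := fun r hr => by
    simp only [mem_compl_iff, mem_singleton_iff]
    exact ne_of_gt (lt_of_lt_of_le hu hr.1)
  have H : StrictAntiOn (fun r => g r + deriv g u * Real.exp (u - r)) (Icc u t) := by
    apply strictAntiOn_of_deriv_neg (convex_Icc u t)
    · exact (hgC.continuousOn.mono hsub).add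
        (continuous_const.mul
          (Real.continuous_exp.comp (continuous_const.sub continuous_id))).continuousOn
    · intro r hr
      rw [interior_Icc] at hr
      have hr0 : 0 < r := lt_trans hu hr.1
      have hexp : HasDerivAt (fun r => Real.exp (u - r)) (Real.exp (u - r) * (-1)) r :=
        (Real.hasDerivAt_exp (u - r)).comp r ((hasDerivAt_id r).const_sub u)
      have hD : HasDerivAt (fun r => g r + deriv g u * Real.exp (u - r))
          (deriv g r + deriv g u * (Real.exp (u - r) * (-1))) r :=
        (hasDerivAt_g hgC r hr0.ne').add (hexp.const_mul (deriv g u))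
      rw [hD.deriv]
      have h2 := keyA' hgC hg'' u r hu hr.1
      nlinarith
  have h := H ⟨le_refl u, le_of_lt hut⟩ ⟨le_of_lt hut, le_refl t⟩ hut
  simp only [sub_self, Real.exp_zero, mul_one] at h
  nlinarith

lemma bPg_integrable (hgInt : Integrable g) :
    Integrable (fun x => bDP x * g (bP x) + bDM x * g (bM x)) := by
  have i1 : Integrable (fun x => bDP x * g (bP x)) := by
    have e1 := integrableOn_image_iff_integrableOn_abs_deriv_smul MeasurableSet.univ
      (fun x _ => (hasDerivAt_bP x).hasDerivWithinAt) (bP_mono.injective.injOn) g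
    rw [bP_image] at e1
    have h := e1.mp hgInt.integrableOn
    rw [integrableOn_univ] at h
    have he : (fun x => |bDP x| • g (bP x)) = fun x => bDP x * g (bP x) := by
      funext x
      rw [abs_of_pos (bDP_pos x), smul_eq_mul]
    rwa [he] at h
  have i2 : Integrable (fun x => bDM x * g (bM x)) := by
    have e1 := integrableOn_image_iff_integrableOn_abs_deriv_smul MeasurableSet.univ
      (fun x _ => (hasDerivAt_bM x).hasDerivWithinAt) (bM_mono.injective.injOn) g
    rw [bM_image] at e1
    have h := e1.mp hgInt.integrableOn
    rw [integrableOn_univ] at h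
    have he : (fun x => |bDM x| • g (bM x)) = fun x => bDM x * g (bM x) := by
      funext x
      rw [abs_of_pos (bDM_pos x), smul_eq_mul]
    rwa [he] at h
  exact i1.add i2

end

lemma booleQuartic {y : ℝ} (hy : 1 < y) : 0 < y ^ 4 - 3 * y ^ 3 + 2 * y ^ 2 + 3 * y + 1 := by
  nlinarith [sq_nonneg ((y - 1) ^ 2 - 1), pow_pos (sub_pos.2 hy) 3, sub_pos.2 hy]

lemma boolePoly1 {y c G Δ gy : ℝ} (hy : 1 < y) (hc : 0 < c) (hG : G < 0)
    (hΔ : Δ ≤ G * (1 - c)) (hgy : gy < c * G) :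
    2 * y ^ 3 * Δ + y ^ 4 * (y ^ 2 + 1) * gy - (y ^ 2 + 1) * G < 0 := by
  have ht : 0 < y - 1 := sub_pos.2 hy
  have hA : 0 < 2 * y ^ 3 - (y ^ 2 + 1) := by nlinarith [pow_pos ht 3, sq_nonneg (y - 1)]
  have hB : 0 < y ^ 4 * (y ^ 2 + 1) - 2 * y ^ 3 := by
    nlinarith [pow_pos ht 3, pow_pos ht 2, pow_pos (lt_trans one_pos hy) 3]
  have f1 : 2 * y ^ 3 * Δ ≤ 2 * y ^ 3 * (G * (1 - c)) :=
    mul_le_mul_of_nonneg_left hΔ (by positivity)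
  have f2 : y ^ 4 * (y ^ 2 + 1) * gy < y ^ 4 * (y ^ 2 + 1) * (c * G) :=
    mul_lt_mul_of_pos_left hgy (by positivity)
  have hbr : 0 < (2 * y ^ 3 - (y ^ 2 + 1)) + c * (y ^ 4 * (y ^ 2 + 1) - 2 * y ^ 3) :=
    add_pos hA (mul_pos hc hB)
  have f3 : G * ((2 * y ^ 3 - (y ^ 2 + 1)) + c * (y ^ 4 * (y ^ 2 + 1) - 2 * y ^ 3)) < 0 :=
    mul_neg_of_neg_of_pos hG hbr
  nlinarith [f1, f2, f3]

lemma boolePoly2 {y c G Δ gy ky ku : ℝ} (hy : 1 < y) (hc : 0 < c) (hG : G < 0)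
    (hΔ : Δ ≤ G * (1 - c)) (hgy : gy < c * G) (hky : ky < 0) (hku : ku < 0) :
    (-(6 * y ^ 4 * (y ^ 2 - 1)) + 2 * y ^ 3 * (y ^ 2 + 1) ^ 2) * Δ
      + (6 * y ^ 5 * (y ^ 2 + 1) + y ^ 4 * (y ^ 2 + 1) ^ 3 - y ^ 6 * (y ^ 2 + 1) ^ 2) * gy
      + (6 * y ^ 3 * (y ^ 2 + 1) - (y ^ 2 + 1) ^ 3 - (y ^ 2 + 1) ^ 2) * G
      + y ^ 6 * (y ^ 2 + 1) ^ 2 * ky + (y ^ 2 + 1) ^ 2 * ku < 0 := by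
  have ht : 0 < y - 1 := sub_pos.2 hy
  have hy0 : 0 < y := lt_trans one_pos hy
  set Q : ℝ := -(6 * y ^ 4 * (y ^ 2 - 1)) + 2 * y ^ 3 * (y ^ 2 + 1) ^ 2 with hQdef
  set C1 : ℝ := 6 * y ^ 5 * (y ^ 2 + 1) + y ^ 4 * (y ^ 2 + 1) ^ 3 - y ^ 6 * (y ^ 2 + 1) ^ 2
    with hC1def
  set C2 : ℝ := 6 * y ^ 3 * (y ^ 2 + 1) - (y ^ 2 + 1) ^ 3 - (y ^ 2 + 1) ^ 2 with hC2def
  have hQ : 0 < Q := by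
    have h4 := booleQuartic hy
    have hr : Q = 2 * y ^ 3 * (y ^ 4 - 3 * y ^ 3 + 2 * y ^ 2 + 3 * y + 1) := by
      rw [hQdef]; ring
    rw [hr]; positivity
  have hC1 : 0 < C1 := by
    have hr : C1 = y ^ 4 * (y ^ 2 + 6 * y + 1) * (y ^ 2 + 1) := by rw [hC1def]; ring
    rw [hr]; positivity
  have hQC2 : 0 < Q + C2 := by
    rw [hQdef, hC2def]
    nlinarith [pow_pos ht 7, pow_pos ht 6, pow_pos ht 5, pow_pos ht 4, pow_pos ht 3,
      pow_pos ht 2, ht]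
  have hC1Q : 0 < C1 - Q := by
    rw [hC1def, hQdef]
    nlinarith [pow_pos ht 8, pow_pos ht 7, pow_pos ht 6, pow_pos ht 5, pow_pos ht 4,
      pow_pos ht 3, pow_pos ht 2, ht, hy0]
  have f1 : Q * Δ ≤ Q * (G * (1 - c)) := mul_le_mul_of_nonneg_left hΔ (le_of_lt hQ)
  have f2 : C1 * gy < C1 * (c * G) := mul_lt_mul_of_pos_left hgy hC1
  have hbr : 0 < (Q + C2) + c * (C1 - Q) := add_pos hQC2 (mul_pos hc hC1Q)
  have f3 : G * ((Q + C2) + c * (C1 - Q)) < 0 := mul_neg_of_neg_of_pos hG hbr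
  have f4 : y ^ 6 * (y ^ 2 + 1) ^ 2 * ky < 0 := mul_neg_of_pos_of_neg (by positivity) hky
  have f5 : (y ^ 2 + 1) ^ 2 * ku < 0 := mul_neg_of_pos_of_neg (by positivity) hku
  nlinarith [f1, f2, f3, f4, f5]

set_option maxHeartbeats 1000000 in
theorem boole_transfer_cone_invariance
    (g : ℝ → ℝ) (hgInt : Integrable g)
    (hgC : ContDiffOn ℝ 2 g ({0}ᶜ : Set ℝ))
    (hgeven : ∀ x, g (-x) = g x)
    (hgpos : ∀ x, 0 < g x)
    (hg' : ∀ x, 0 < x → deriv g x < 0)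
    (hg'' : ∀ x, 0 < x → deriv (deriv g) x + deriv g x < 0)
    (φp φm : ℝ → ℝ)
    (hφp : ∀ x, φp x = x / 2 + Real.sqrt (x ^ 2 / 4 + 1))
    (hφm : ∀ x, φm x = x / 2 - Real.sqrt (x ^ 2 / 4 + 1))
    (Pg : ℝ → ℝ)
    (hPg : ∀ x, Pg x = deriv φp x * g (φp x) + |deriv φm x| * g (φm x)) :
    Integrable Pg ∧
    ContDiffOn ℝ 2 Pg ({0}ᶜ : Set ℝ) ∧
    (∀ x, Pg (-x) = Pg x) ∧
    (∀ x, 0 < Pg x) ∧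
    (∀ x, 0 < x → deriv Pg x < 0) ∧
    (∀ x, 0 < x → deriv (deriv Pg) x + deriv Pg x < 0) := by
  have hφpb : φp = bP := funext fun x => by rw [hφp x]; rfl
  have hφmb : φm = bM := funext fun x => by rw [hφm x]; rfl
  subst hφpb
  subst hφmb
  have hPfun : Pg = fun x => bDP x * g (bP x) + bDM x * g (bM x) := by
    funext x
    rw [hPg x, (hasDerivAt_bP x).deriv, (hasDerivAt_bM x).deriv, abs_of_pos (bDM_pos x)]
  -- evenness helpers
  have hbSqe : ∀ x : ℝ, bSq (-x) = bSq x := fun x => by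
    unfold bSq; rw [show (-x) ^ 2 = x ^ 2 by ring]
  have hbPe : ∀ x : ℝ, bP (-x) = -bM x := fun x => by
    unfold bP bM; rw [hbSqe x]; ring
  have hbMe : ∀ x : ℝ, bM (-x) = -bP x := fun x => by
    unfold bM bP; rw [hbSqe x]; ring
  have hbDPe : ∀ x : ℝ, bDP (-x) = bDM x := fun x => by
    unfold bDP bDM; rw [hbSqe x]; ring
  have hbDMe : ∀ x : ℝ, bDM (-x) = bDP x := fun x => by
    unfold bDM bDP; rw [hbSqe x]; ring
  -- derivative identification
  have hderiv1 : deriv Pg = bE g := funext fun x => by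
    rw [hPfun]; exact (hasDerivAt_bPg hgC x).deriv
  have hderiv2 : ∀ x, deriv (deriv Pg) x = bE2 g x := fun x => by
    rw [hderiv1]; exact (hasDerivAt_bE hgC x).deriv
  refine ⟨?_, ?_, ?_, ?_, ?_, ?_⟩
  · rw [hPfun]; exact bPg_integrable hgInt
  · -- smoothness
    rw [hPfun]
    intro x _
    apply ContDiffAt.contDiffWithinAt
    have hq : ContDiffAt ℝ 2 (fun x : ℝ => x ^ 2 / 4 + 1) x :=
      (((contDiff_id.pow 2).div_const 4).add contDiff_const).contDiffAt
    have hsq : ContDiffAt ℝ 2 bSq x :=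
      (Real.contDiffAt_sqrt (by positivity : x ^ 2 / 4 + 1 ≠ 0)).comp x hq
    have hbP : ContDiffAt ℝ 2 bP x := (contDiffAt_id.div_const 2).add hsq
    have hbM : ContDiffAt ℝ 2 bM x := (contDiffAt_id.div_const 2).sub hsq
    have hbDP : ContDiffAt ℝ 2 bDP x :=
      contDiffAt_const.add (contDiffAt_id.div (contDiffAt_const.mul hsq)
        (mul_pos (by norm_num : (0:ℝ) < 4) (bSq_pos x)).ne')
    have hbDM : ContDiffAt ℝ 2 bDM x :=
      contDiffAt_const.sub (contDiffAt_id.div (contDiffAt_const.mul hsq)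
        (mul_pos (by norm_num : (0:ℝ) < 4) (bSq_pos x)).ne')
    have hgP : ContDiffAt ℝ 2 (fun x => g (bP x)) x :=
      (gCAt hgC (bP x) (bP_pos x).ne').comp x hbP
    have hgM : ContDiffAt ℝ 2 (fun x => g (bM x)) x :=
      (gCAt hgC (bM x) (bM_neg x).ne).comp x hbM
    exact (hbDP.mul hgP).add (hbDM.mul hgM)
  · intro x
    rw [hPfun]
    simp only
    rw [hbDPe x, hbDMe x, hbPe x, hbMe x, hgeven (bM x), hgeven (bP x)]
    ring
  · intro x
    rw [hPfun]
    exact add_pos (mul_pos (bDP_pos x) (hgpos _)) (mul_pos (bDM_pos x) (hgpos _))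
  all_goals {
    intro x hx
    have hy1 : 1 < bP x := by
      have := bSq_one_le x; unfold bP; linarith
    have hy0 : (0:ℝ) < bP x := lt_trans one_pos hy1
    set y := bP x with hydef
    have hu0 : 0 < 1 / y := by positivity
    have huy : 1 / y < y := by
      have h1 : 1 / y < 1 := by rw [div_lt_one hy0]; exact hy1
      linarith
    obtain ⟨e1, e2, e3, e4, e5⟩ :=
      boole_ids x (bSq x) y (bSq_pos x) hy0 rfl (bSq_sq x)
    have hbm : bM x = -(1 / y) := e1
    have hdp : bDP x = y ^ 2 / (y ^ 2 + 1) := e2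
    have hdm : bDM x = 1 / (y ^ 2 + 1) := e3
    have hs2 : bS2 x = 2 * y ^ 3 / (y ^ 2 + 1) ^ 3 := e4
    have hs3 : bS3 x = -(6 * y ^ 4 * (y ^ 2 - 1)) / (y ^ 2 + 1) ^ 5 := e5
    have hgm : g (bM x) = g (1 / y) := by rw [hbm, hgeven]
    have hdgm : deriv g (bM x) = -deriv g (1 / y) := by
      rw [hbm]; exact deriv_g_odd hgC hgeven (1 / y) hu0.ne'
    have hddgm : deriv (deriv g) (bM x) = deriv (deriv g) (1 / y) := by
      rw [hbm]; exact deriv2_g_even hgC hgeven (1 / y) hu0.ne'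
    have hc : 0 < Real.exp (1 / y - y) := Real.exp_pos _
    have hG : deriv g (1 / y) < 0 := hg' (1 / y) hu0
    have hΔ : g y - g (1 / y) ≤ deriv g (1 / y) * (1 - Real.exp (1 / y - y)) :=
      keyB hgC hg'' (1 / y) y hu0 huy
    have hgy : deriv g y < Real.exp (1 / y - y) * deriv g (1 / y) :=
      keyA' hgC hg'' (1 / y) y hu0 huy
    have hD1 : (0:ℝ) < (y ^ 2 + 1) ^ 3 := by positivity
    have hD2 : (0:ℝ) < (y ^ 2 + 1) ^ 5 := by positivity
    first
    | { -- first derivative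
        rw [hderiv1]
        have hEeq : bE g x =
            (2 * y ^ 3 * (g y - g (1 / y)) + y ^ 4 * (y ^ 2 + 1) * deriv g y
              - (y ^ 2 + 1) * deriv g (1 / y)) / (y ^ 2 + 1) ^ 3 := by
          unfold bE
          rw [← hydef, hgm, hdgm, hdp, hdm, hs2]
          field_simp
          ring
        rw [hEeq]
        exact div_neg_of_neg_of_pos (boolePoly1 hy1 hc hG hΔ hgy) hD1 }
    | { -- second derivative
        rw [hderiv2, hderiv1]
        have hky : deriv (deriv g) y + deriv g y < 0 := hg'' y hy0
        have hku : deriv (deriv g) (1 / y) + deriv g (1 / y) < 0 := hg'' (1 / y) hu0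
        have hEeq : bE2 g x + bE g x =
            ((-(6 * y ^ 4 * (y ^ 2 - 1)) + 2 * y ^ 3 * (y ^ 2 + 1) ^ 2) * (g y - g (1 / y))
              + (6 * y ^ 5 * (y ^ 2 + 1) + y ^ 4 * (y ^ 2 + 1) ^ 3
                  - y ^ 6 * (y ^ 2 + 1) ^ 2) * deriv g y
              + (6 * y ^ 3 * (y ^ 2 + 1) - (y ^ 2 + 1) ^ 3 - (y ^ 2 + 1) ^ 2)
                  * deriv g (1 / y)
              + y ^ 6 * (y ^ 2 + 1) ^ 2 * (deriv (deriv g) y + deriv g y)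
              + (y ^ 2 + 1) ^ 2 * (deriv (deriv g) (1 / y) + deriv g (1 / y)))
            / (y ^ 2 + 1) ^ 5 := by
          unfold bE bE2
          rw [← hydef, hgm, hdgm, hddgm, hdp, hdm, hs2, hs3]
          field_simp
          ring
        rw [hEeq]
        exact div_neg_of_neg_of_pos (boolePoly2 hy1 hc hG hΔ hgy hky hku) hD2 }
  }
end

section
/- Let g : ℝ → ℝ be even, positive, strictly decreasing on (0,∞), integrable with ∫ g dm ≤ 1. Fix ā > 0 and set γ(x) := min{g(ā), g(x)}. If F : ℝ → ℝ is bounded measurable with |∫_{-a}^{a} F dm| ≤ ε·a for all a ≥ ā, then |∫_ℝ F·γ dm| ≤ (ε/2)·∫ γ dm ≤ ε/2. -/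
open Set MeasureTheory

lemma slicing_layer (g : ℝ → ℝ) (hgInt : Integrable g)
    (hgeven : ∀ x, g (-x) = g x) (hgpos : ∀ x, 0 < g x)
    (hganti : StrictAntiOn g (Ioi 0))
    (abar : ℝ) (habar : 0 < abar) (r : ℝ) (hr0 : 0 < r) (hrc : r < g abar) :
    ∃ a : ℝ, abar ≤ a ∧
      ({x : ℝ | r < min (g abar) (g x)} : Set ℝ) =ᵐ[volume] Ioo (-a) a := by
  have habs : ∀ x : ℝ, g |x| = g x := by
    intro x
    rcases le_or_gt 0 x with h | h
    · rw [abs_of_nonneg h]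
    · rw [abs_of_neg h, hgeven]
  set S : Set ℝ := {x | 0 < x ∧ r < g x} with hS
  have hmem : abar ∈ S := ⟨habar, hrc⟩
  have hbdd : BddAbove S := by
    by_contra hb
    rw [not_bddAbove_iff] at hb
    have hge : ∀ y : ℝ, 0 < y → r < g y := by
      intro y hy
      obtain ⟨x, hxS, hyx⟩ := hb y
      exact hxS.2.trans_le (hganti hy (hy.trans hyx) hyx).le
    -- const r is integrable on Ioi 0, contradiction
    have hint : Integrable (fun _ : ℝ => r) (volume.restrict (Ioi 0)) := by
      refine (hgInt.restrict (s := Ioi 0)).mono aestronglyMeasurable_const ?_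
      refine (ae_restrict_iff' measurableSet_Ioi).2 (ae_of_all _ fun x hx => ?_)
      have := hge x hx
      rw [Real.norm_eq_abs, Real.norm_eq_abs, abs_of_pos hr0, abs_of_pos (hgpos x)]
      exact this.le
    rw [integrable_const_iff] at hint
    rcases hint with h | h
    · exact hr0.ne' h
    · have h' := h.measure_univ_lt_top
      simp [Measure.restrict_apply_univ] at h'
  set a : ℝ := sSup S with ha
  have haabar : abar ≤ a := le_csSup hbdd hmem
  have ha0 : 0 < a := habar.trans_le haabar
  have hlt : ∀ x : ℝ, 0 < x → x < a → r < g x := by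
    intro x hx hxa
    obtain ⟨y, hyS, hxy⟩ := exists_lt_of_lt_csSup ⟨abar, hmem⟩ hxa
    exact hyS.2.trans (hganti hx (hx.trans hxy) hxy)
  have hgt : ∀ x : ℝ, a < x → g x ≤ r := by
    intro x hax
    by_contra hc
    push_neg at hc
    exact absurd (le_csSup hbdd ⟨ha0.trans hax, hc⟩) (not_le.2 hax)
  refine ⟨a, haabar, ?_⟩
  rw [Filter.eventuallyEq_set]
  rw [MeasureTheory.ae_iff]
  have hnull : volume ({-a, 0, a} : Set ℝ) = 0 :=
    ((((Set.finite_singleton (a:ℝ)).insert 0).insert (-a))).measure_zero _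
  refine measure_mono_null ?_ hnull
  · intro x hx
    show x ∈ ({-a, 0, a} : Set ℝ)
    by_contra hnot
    simp only [mem_insert_iff, mem_singleton_iff, not_or] at hnot
    obtain ⟨hna, h0, hpa⟩ := hnot
    have hxabs : 0 < |x| := abs_pos.2 h0
    apply hx
    constructor
    · intro hmem'
      have hrgx : r < g x := (lt_min_iff.1 hmem').2
      have hxa : |x| < a := by
        rcases lt_trichotomy |x| a with h | h | h
        · exact h
        · rcases (abs_eq ha0.le).1 h with h' | h'
          · exact absurd h' hpa
          · exact absurd h' hna
        · exact absurd (hgt _ h) (not_le.2 (by rwa [habs]))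
      exact mem_Ioo.2 (abs_lt.1 hxa)
    · intro hmem'
      obtain ⟨h1, h2⟩ := mem_Ioo.1 hmem'
      have hxa : |x| < a := abs_lt.2 ⟨h1, h2⟩
      have hgx := hlt _ hxabs hxa
      rw [habs] at hgx
      exact mem_setOf.2 (lt_min hrc hgx)

theorem slicing_estimate
    (g : ℝ → ℝ) (hgInt : Integrable g)
    (hgeven : ∀ x, g (-x) = g x)
    (hgpos : ∀ x, 0 < g x)
    (hganti : StrictAntiOn g (Ioi 0))
    (hgnorm : ∫ x, g x ≤ 1)
    (abar : ℝ) (habar : 0 < abar)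
    (γ : ℝ → ℝ) (hγ : ∀ x, γ x = min (g abar) (g x))
    (F : ℝ → ℝ) (hFm : Measurable F) (C : ℝ) (hFb : ∀ x, |F x| ≤ C)
    (ε : ℝ) (hε : 0 ≤ ε)
    (hF : ∀ a : ℝ, abar ≤ a → |∫ x in (-a)..a, F x| ≤ ε * a) :
    |∫ x, F x * γ x| ≤ (ε / 2) * ∫ x, γ x ∧ (ε / 2) * ∫ x, γ x ≤ ε / 2 := by
  have hc0 : 0 < g abar := hgpos abar
  have hγpos : ∀ x, 0 < γ x := fun x => by rw [hγ]; exact lt_min hc0 (hgpos x)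
  have hγle : ∀ x, γ x ≤ g x := fun x => by rw [hγ]; exact min_le_right _ _
  have hγlec : ∀ x, γ x ≤ g abar := fun x => by rw [hγ]; exact min_le_left _ _
  have habs : ∀ x : ℝ, g |x| = g x := by
    intro x
    rcases le_or_gt 0 x with h | h
    · rw [abs_of_nonneg h]
    · rw [abs_of_neg h, hgeven]
  -- measurability of γ
  have hγm : Measurable γ := by
    have key : γ = fun x => if x = 0 then γ 0 else
        (fun y : ℝ => if y ≤ 0 then g abar else min (g abar) (g y)) |x| := by
      funext x
      by_cases hx : x = 0
      · simp [hx]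
      · have h1 : ¬ |x| ≤ 0 := not_le.2 (abs_pos.2 hx)
        simp only [if_neg hx, if_neg h1, habs, hγ]
    rw [key]
    have hanti : Antitone (fun y : ℝ => if y ≤ 0 then g abar else min (g abar) (g y)) := by
      intro y₁ y₂ h
      simp only
      by_cases h2 : y₂ ≤ 0
      · rw [if_pos h2, if_pos (h.trans h2)]
      · rw [if_neg h2]
        by_cases h1 : y₁ ≤ 0
        · rw [if_pos h1]; exact min_le_left _ _
        · rw [if_neg h1]
          rcases h.eq_or_lt with rfl | hlt
          · exact le_rfl
          · exact min_le_min le_rfl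
              (hganti (not_le.1 h1) ((not_le.1 h1).trans hlt) hlt).le
    exact Measurable.ite (by simpa using measurableSet_singleton (0:ℝ)) measurable_const
      (hanti.measurable.comp measurable_abs)
  have hγInt : Integrable γ := by
    refine hgInt.mono hγm.aestronglyMeasurable (ae_of_all _ fun x => ?_)
    rw [Real.norm_eq_abs, Real.norm_eq_abs, abs_of_pos (hγpos x), abs_of_pos (hgpos x)]
    exact hγle x
  have hγint_le : ∫ x, γ x ≤ ∫ x, g x := integral_mono hγInt hgInt hγle
  have hγint_nonneg : 0 ≤ ∫ x, γ x := integral_nonneg fun x => (hγpos x).le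
  have second : (ε/2) * ∫ x, γ x ≤ ε/2 := by
    have h1 : ∫ x, γ x ≤ 1 := hγint_le.trans hgnorm
    calc (ε/2) * ∫ x, γ x ≤ (ε/2) * 1 := mul_le_mul_of_nonneg_left h1 (by linarith)
      _ = ε/2 := mul_one _
  refine ⟨?_, second⟩
  have hC0 : 0 ≤ C := (abs_nonneg _).trans (hFb 0)
  set f : ℝ → ℝ → ℝ := fun x r => (Ioo (0:ℝ) (γ x)).indicator (fun _ => F x) r with hf
  set T : Set (ℝ × ℝ) := {p : ℝ × ℝ | 0 < p.2 ∧ p.2 < γ p.1} with hT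
  have hTm : MeasurableSet T :=
    (measurableSet_lt measurable_const measurable_snd).inter
      (measurableSet_lt measurable_snd (hγm.comp measurable_fst))
  have huncurry : Function.uncurry f = T.indicator (fun p => F p.1) := by
    funext p
    obtain ⟨x, r⟩ := p
    simp only [hf]
    by_cases h : 0 < r ∧ r < γ x
    · have hmem : r ∈ Ioo (0:ℝ) (γ x) := mem_Ioo.2 h
      rw [Function.uncurry_apply_pair, indicator_of_mem hmem (fun _ => F x)]
      exact (indicator_of_mem (show (x, r) ∈ T from h) (fun p : ℝ × ℝ => F p.1)).symm
    · have hnmem : r ∉ Ioo (0:ℝ) (γ x) := fun hm => h (mem_Ioo.1 hm)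
      rw [Function.uncurry_apply_pair, indicator_of_notMem hnmem (fun _ => F x)]
      exact (indicator_of_notMem (show (x, r) ∉ T from h) (fun p : ℝ × ℝ => F p.1)).symm
  have hγ_nn : (0:ℝ→ℝ) ≤ᵐ[volume] γ := ae_of_all _ fun x => (hγpos x).le
  have hT_eval : (volume.prod volume) T = ENNReal.ofReal (∫ x, γ x) := by
    rw [Measure.prod_apply hTm]
    have hsec : ∀ x : ℝ, (Prod.mk x ⁻¹' T) = Ioo 0 (γ x) := by
      intro x; ext r; simp [hT, mem_Ioo]
    simp_rw [hsec, Real.volume_Ioo, sub_zero]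
    exact (ofReal_integral_eq_lintegral_ofReal hγInt hγ_nn).symm
  have hTfin : (volume.prod volume) T < ⊤ := by
    rw [hT_eval]; exact ENNReal.ofReal_lt_top
  have hbound : Integrable (T.indicator fun _ => C) (volume.prod volume) := by
    rw [integrable_indicator_iff hTm]
    exact integrableOn_const hTfin.ne
  have hfint : Integrable (Function.uncurry f) (volume.prod volume) := by
    rw [huncurry]
    refine hbound.mono' ((hFm.comp measurable_fst).indicator hTm).aestronglyMeasurable
      (ae_of_all _ fun p => ?_)
    by_cases hp : p ∈ T
    · rw [indicator_of_mem hp, indicator_of_mem hp, Real.norm_eq_abs]; exact hFb _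
    · rw [indicator_of_notMem hp, indicator_of_notMem hp]; simp
  have hswap := integral_integral_swap hfint
  have hL : ∀ x, (∫ r, f x r) = F x * γ x := by
    intro x
    rw [hf]
    rw [integral_indicator_const (F x) measurableSet_Ioo, Real.volume_real_Ioo_of_le (hγpos x).le, sub_zero,
      smul_eq_mul, mul_comm]
  set I : ℝ → ℝ := fun r => ∫ x, f x r with hI
  have hmain : ∫ x, F x * γ x = ∫ r, I r := by
    calc ∫ x, F x * γ x = ∫ x, ∫ r, f x r := by
          exact integral_congr_ae (ae_of_all _ fun x => (hL x).symm)
      _ = ∫ r, I r := hswap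
  have hI0 : ∀ r : ℝ, r ≤ 0 → I r = 0 := by
    intro r hr
    have hz : ∀ x, f x r = 0 := fun x =>
      indicator_of_notMem (fun hm => absurd (mem_Ioo.1 hm).1 (not_lt.2 hr)) _
    simp only [hI, hz, integral_zero]
  have hkey : ∀ r : ℝ, ENNReal.ofReal ‖I r‖ ≤
      ENNReal.ofReal (ε/2) * volume {x : ℝ | r < γ x} := by
    intro r
    rcases le_or_gt r 0 with hr | hr0
    · rw [hI0 r hr]; simp
    rcases le_or_gt (g abar) r with hrc | hrc
    · have hz : ∀ x, f x r = 0 := fun x =>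
        indicator_of_notMem (fun hm =>
          absurd (mem_Ioo.1 hm).2 (not_lt.2 ((hγlec x).trans hrc))) _
      have hIz : I r = 0 := by simp only [hI, hz, integral_zero]
      rw [hIz]; simp
    · obtain ⟨a, haabar, hae⟩ :=
        slicing_layer g hgInt hgeven hgpos hganti abar habar r hr0 hrc
      have ha0 : 0 < a := habar.trans_le haabar
      have hset : {x : ℝ | r < γ x} = {x : ℝ | r < min (g abar) (g x)} := by
        ext x; simp [hγ]
      have hSm : MeasurableSet {x : ℝ | r < γ x} :=
        measurableSet_lt measurable_const hγm
      have hIr : I r = ∫ x in {x : ℝ | r < γ x}, F x := by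
        have hfr : ∀ x, f x r = ({x : ℝ | r < γ x}).indicator F x := by
          intro x
          simp only [hf]
          by_cases hx : r < γ x
          · have hmem : r ∈ Ioo (0:ℝ) (γ x) := mem_Ioo.2 ⟨hr0, hx⟩
            rw [indicator_of_mem hmem (fun _ => F x)]
            exact (indicator_of_mem (show x ∈ {x : ℝ | r < γ x} from hx) F).symm
          · have hnmem : r ∉ Ioo (0:ℝ) (γ x) := fun hm => hx (mem_Ioo.1 hm).2
            rw [indicator_of_notMem hnmem (fun _ => F x)]
            exact (indicator_of_notMem (show x ∉ {x : ℝ | r < γ x} from hx) F).symm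
        simp only [hI, hfr]
        exact integral_indicator hSm
      have hvol : volume {x : ℝ | r < γ x} = ENNReal.ofReal (2*a) := by
        rw [hset, measure_congr hae, Real.volume_Ioo]
        congr 1; ring
      have hIeq : I r = ∫ x in (-a)..a, F x := by
        rw [hIr, hset, setIntegral_congr_set hae, ← integral_Ioc_eq_integral_Ioo,
          ← intervalIntegral.integral_of_le (by linarith : -a ≤ a)]
      rw [hIeq, hvol, Real.norm_eq_abs]
      calc ENNReal.ofReal |∫ x in (-a)..a, F x| ≤ ENNReal.ofReal (ε * a) :=
            ENNReal.ofReal_le_ofReal (hF a haabar)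
        _ = ENNReal.ofReal (ε/2) * ENNReal.ofReal (2*a) := by
            rw [← ENNReal.ofReal_mul (by linarith)]; congr 1; ring
  have hnorm : |∫ x, F x * γ x| ≤ (∫⁻ r, ENNReal.ofReal ‖I r‖).toReal := by
    rw [hmain, ← Real.norm_eq_abs]
    exact norm_integral_le_lintegral_norm _
  have hres : (∫⁻ r, ENNReal.ofReal ‖I r‖) = ∫⁻ r in Ioi 0, ENNReal.ofReal ‖I r‖ := by
    rw [← lintegral_indicator measurableSet_Ioi]
    congr 1; funext r
    by_cases hr : (0:ℝ) < r
    · exact (indicator_of_mem (show r ∈ Ioi (0:ℝ) from hr) (fun r => ENNReal.ofReal ‖I r‖)).symm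
    · rw [hI0 r (not_lt.1 hr)]
      simp only [norm_zero, ENNReal.ofReal_zero]
      exact (indicator_of_notMem (show r ∉ Ioi (0:ℝ) from hr) (fun r => ENNReal.ofReal ‖I r‖)).symm
  have hlayer := lintegral_eq_lintegral_meas_lt volume hγ_nn hγm.aemeasurable
  have hchain : (∫⁻ r, ENNReal.ofReal ‖I r‖) ≤
      ENNReal.ofReal (ε/2) * ENNReal.ofReal (∫ x, γ x) := by
    rw [hres]
    calc ∫⁻ r in Ioi 0, ENNReal.ofReal ‖I r‖
        ≤ ∫⁻ r in Ioi 0, ENNReal.ofReal (ε/2) * volume {x : ℝ | r < γ x} :=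
          lintegral_mono fun r => hkey r
      _ = ENNReal.ofReal (ε/2) * ∫⁻ r in Ioi 0, volume {x : ℝ | r < γ x} :=
          lintegral_const_mul' _ _ ENNReal.ofReal_ne_top
      _ = ENNReal.ofReal (ε/2) * ∫⁻ x, ENNReal.ofReal (γ x) := by rw [hlayer]
      _ = ENNReal.ofReal (ε/2) * ENNReal.ofReal (∫ x, γ x) := by
          rw [ofReal_integral_eq_lintegral_ofReal hγInt hγ_nn]
  calc |∫ x, F x * γ x| ≤ (∫⁻ r, ENNReal.ofReal ‖I r‖).toReal := hnorm
    _ ≤ (ENNReal.ofReal (ε/2) * ENNReal.ofReal (∫ x, γ x)).toReal :=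
        ENNReal.toReal_mono
          (ENNReal.mul_ne_top ENNReal.ofReal_ne_top ENNReal.ofReal_ne_top) hchain
    _ = (ε/2) * ∫ x, γ x := by
        rw [← ENNReal.ofReal_mul (by linarith), ENNReal.toReal_ofReal
          (mul_nonneg (by linarith) hγint_nonneg)]
end
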